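/- arXiv:1008.1439 — 4 statements merged into one kernel-verified Lean document; each statement's English description precedes it below -/
import Mathlib

section
/- For all non-negative real numbers u and v, there exists a constant C > 0 (depending only on u and v) such that for all n ≥ 2 and all x ∈ (0,1), the sum over k from 1 to n-1 of (k/n)^(-u) * (1 - k/n)^(-v) * C(n,k) * x^k * (1-x)^(n-k) is at most C * x^(-u) * (1-x)^(-v). -/
open Finset Real

lemma my_choose_prod (n k m : ℕ) :
    n.choose k * ∏ i ∈ range m, (n + 1 + i) =
    (n + m).choose (k + m) * ∏ i ∈ range m, (k + 1 + i) := by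
  induction m with
  | zero => simp
  | succ m ih =>
    have e1 : n + (m+1) = (n + m) + 1 := by omega
    have e2 : k + (m+1) = (k + m) + 1 := by omega
    rw [prod_range_succ, prod_range_succ, ← mul_assoc, ih, e1, e2]
    have h : (n + m + 1) * (n + m).choose (k + m) = (n + m + 1).choose (k + m + 1) * (k + m + 1) :=
      Nat.add_one_mul_choose_eq (n + m) (k + m)
    calc (n + m).choose (k + m) * (∏ i ∈ range m, (k + 1 + i)) * (n + 1 + m)
        = ((n + m + 1) * (n + m).choose (k + m)) * ∏ i ∈ range m, (k + 1 + i) := by ring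
      _ = ((n + m + 1).choose (k + m + 1) * (k + m + 1)) * ∏ i ∈ range m, (k + 1 + i) := by
          rw [h]
      _ = (n + m + 1).choose (k + m + 1) * ((∏ i ∈ range m, (k + 1 + i)) * (k + 1 + m)) := by
          ring

lemma my_bern_sum (n : ℕ) (x : ℝ) :
    ∑ k ∈ range (n+1), (n.choose k : ℝ) * x ^ k * (1-x) ^ (n-k) = 1 := by
  have h := add_pow x (1-x) n
  simp only [add_sub_cancel, one_pow] at h
  calc ∑ k ∈ range (n+1), (n.choose k : ℝ) * x ^ k * (1-x) ^ (n-k)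
      = ∑ k ∈ range (n+1), x ^ k * (1-x) ^ (n-k) * (n.choose k : ℝ) :=
        Finset.sum_congr rfl (fun k _ => by ring)
    _ = 1 := h.symm


lemma my_shift_sum_le (n m : ℕ) (x : ℝ) (hx0 : 0 < x) (hx1 : x < 1) :
    ∑ k ∈ Ico 1 n, ((n+m).choose (k+m) : ℝ) * x ^ (k+m) * (1-x) ^ (n-k) ≤ 1 := by
  have key : ∑ k ∈ Ico 1 n, ((n+m).choose (k+m) : ℝ) * x ^ (k+m) * (1-x) ^ (n-k)
      = ∑ j ∈ Ico (1+m) (n+m), ((n+m).choose j : ℝ) * x ^ j * (1-x) ^ ((n+m)-j) := by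
    refine Finset.sum_nbij' (fun k => k + m) (fun j => j - m) ?_ ?_ ?_ ?_ ?_
    · intro a ha; simp only [mem_Ico] at *; omega
    · intro a ha; simp only [mem_Ico] at *; omega
    · intro a _; omega
    · intro a ha; simp only [mem_Ico] at ha; omega
    · intro a ha
      simp only [mem_Ico] at ha
      have : n + m - (a + m) = n - a := by omega
      rw [this]
  rw [key]
  have h1 : Ico (1+m) (n+m) ⊆ range (n+m+1) := by
    intro j hj; simp only [mem_Ico, mem_range] at *; omega
  refine le_trans (Finset.sum_le_sum_of_subset_of_nonneg h1 ?_) (le_of_eq (my_bern_sum (n+m) x))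
  intro j _ _
  have : (0:ℝ) ≤ 1 - x := by linarith
  positivity

lemma my_prod_two_add (m : ℕ) : ∏ i ∈ range m, (2 + i) = Nat.factorial (m+1) := by
  induction m with
  | zero => simp [Nat.factorial]
  | succ m ih =>
    rw [prod_range_succ, ih]
    conv_rhs => rw [Nat.factorial_succ]
    ring

lemma my_key_ineq (n k m : ℕ) (hk : 1 ≤ k) :
    ((n:ℝ)/k) ^ m * (n.choose k : ℝ)
      ≤ (Nat.factorial (m+1) : ℝ) * ((n+m).choose (k+m) : ℝ) := by
  have hk0 : (0:ℝ) < k := by exact_mod_cast hk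
  set A : ℝ := ∏ i ∈ range m, ((k:ℝ)+1+i) with hAdef
  set B : ℝ := ∏ i ∈ range m, ((n:ℝ)+1+i) with hBdef
  set F : ℝ := (Nat.factorial (m+1) : ℝ) with hFdef
  have hA : (0:ℝ) < A := by rw [hAdef]; positivity
  have hB : (0:ℝ) < B := Finset.prod_pos (fun i _ => by positivity)
  have hC' : (0:ℝ) ≤ ((n+m).choose (k+m) : ℝ) := Nat.cast_nonneg _
  have hid : (n.choose k : ℝ) * B = ((n+m).choose (k+m) : ℝ) * A := by
    rw [hAdef, hBdef]
    have := my_choose_prod n k m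
    have h2 := congrArg (Nat.cast : ℕ → ℝ) this
    push_cast at h2
    convert h2 using 2
  have hAk : A ≤ F * (k:ℝ)^m := by
    have h1 : A ≤ ∏ i ∈ range m, ((k:ℝ)*(2+i)) := by
      apply Finset.prod_le_prod
      · intro i _; positivity
      · intro i _
        have : (1:ℝ) + i ≤ (k:ℝ) * (1+i) := by
          have h1k : (1:ℝ) ≤ (k:ℝ) := by exact_mod_cast hk
          nlinarith
        nlinarith
    calc A ≤ ∏ i ∈ range m, ((k:ℝ)*(2+i)) := h1
      _ = (k:ℝ)^m * ∏ i ∈ range m, ((2:ℝ)+i) := by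
          rw [Finset.prod_mul_distrib, Finset.prod_const, card_range]
      _ = F * (k:ℝ)^m := by
          have : ∏ i ∈ range m, ((2:ℝ)+i) = F := by
            rw [hFdef, ← my_prod_two_add m]
            push_cast
            rfl
          rw [this]; ring
  have hnB : (n:ℝ)^m ≤ B := by
    calc (n:ℝ)^m = ∏ _i ∈ range m, (n:ℝ) := by rw [Finset.prod_const, card_range]
      _ ≤ B := Finset.prod_le_prod (fun i _ => Nat.cast_nonneg n) (fun i _ => by have : (0:ℝ) ≤ (i:ℝ) := Nat.cast_nonneg i; linarith)
  rw [div_pow, div_mul_eq_mul_div, div_le_iff₀ (by positivity), ← mul_le_mul_iff_of_pos_right hB]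
  calc (n:ℝ)^m * (n.choose k : ℝ) * B = (n:ℝ)^m * (((n+m).choose (k+m) : ℝ) * A) := by
        rw [mul_assoc, hid]
    _ = (A * (n:ℝ)^m) * ((n+m).choose (k+m) : ℝ) := by ring
    _ ≤ ((F * (k:ℝ)^m) * B) * ((n+m).choose (k+m) : ℝ) := by
        apply mul_le_mul_of_nonneg_right _ hC'
        exact mul_le_mul hAk hnB (by positivity) (by positivity)
    _ = F * ((n+m).choose (k+m) : ℝ) * (k:ℝ)^m * B := by ring

lemma my_moment (n m : ℕ) (x : ℝ) (hx0 : 0 < x) (hx1 : x < 1) :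
    ∑ k ∈ Ico 1 n, ((n:ℝ)/k) ^ m * (n.choose k : ℝ) * x ^ k * (1-x) ^ (n-k)
      ≤ (Nat.factorial (m+1) : ℝ) / x ^ m := by
  have h1x : (0:ℝ) < 1 - x := by linarith
  calc ∑ k ∈ Ico 1 n, ((n:ℝ)/k) ^ m * (n.choose k : ℝ) * x ^ k * (1-x) ^ (n-k)
      ≤ ∑ k ∈ Ico 1 n, (Nat.factorial (m+1) : ℝ) / x ^ m *
          (((n+m).choose (k+m) : ℝ) * x ^ (k+m) * (1-x) ^ (n-k)) := by
        apply Finset.sum_le_sum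
        intro k hk
        simp only [mem_Ico] at hk
        have key := my_key_ineq n k m hk.1
        have hx' : x ^ (k+m) = x ^ k * x ^ m := pow_add x k m
        calc ((n:ℝ)/k) ^ m * (n.choose k : ℝ) * x ^ k * (1-x) ^ (n-k)
            = (((n:ℝ)/k) ^ m * (n.choose k : ℝ)) * (x ^ k * (1-x) ^ (n-k)) := by ring
          _ ≤ ((Nat.factorial (m+1) : ℝ) * ((n+m).choose (k+m) : ℝ)) * (x ^ k * (1-x) ^ (n-k)) :=
              mul_le_mul_of_nonneg_right key (by positivity)
          _ = (Nat.factorial (m+1) : ℝ) / x ^ m *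
              (((n+m).choose (k+m) : ℝ) * x ^ (k+m) * (1-x) ^ (n-k)) := by
              rw [hx']; field_simp
    _ = (Nat.factorial (m+1) : ℝ) / x ^ m *
        ∑ k ∈ Ico 1 n, (((n+m).choose (k+m) : ℝ) * x ^ (k+m) * (1-x) ^ (n-k)) := by
        rw [Finset.mul_sum]
    _ ≤ (Nat.factorial (m+1) : ℝ) / x ^ m * 1 :=
        mul_le_mul_of_nonneg_left (my_shift_sum_le n m x hx0 hx1) (by positivity)
    _ = (Nat.factorial (m+1) : ℝ) / x ^ m := mul_one _


lemma my_single (u : ℝ) (hu : 0 ≤ u) :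
    ∃ C > 0, ∀ n : ℕ, 1 ≤ n → ∀ x ∈ Set.Ioo (0:ℝ) 1,
      ∑ k ∈ Ico 1 n, ((k:ℝ)/n) ^ (-u) * (n.choose k : ℝ) * x ^ k * (1-x) ^ (n-k)
        ≤ C * x ^ (-u) := by
  rcases eq_or_lt_of_le hu with heq | hu'
  · -- u = 0
    refine ⟨1, one_pos, fun n hn x hx => ?_⟩
    obtain ⟨hx0, hx1⟩ := hx
    have h0 := my_shift_sum_le n 0 x hx0 hx1
    simp only [add_zero, pow_zero] at h0
    simp only [← heq, neg_zero, rpow_zero, one_mul, mul_one]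
    exact h0
  · -- u > 0
    set m : ℕ := ⌈u⌉₊ with hmdef
    have hm1 : 1 ≤ m := Nat.one_le_iff_ne_zero.mpr (by
      simp only [hmdef, ne_eq, Nat.ceil_eq_zero, not_le]; exact hu')
    have hum : u ≤ (m:ℝ) := Nat.le_ceil u
    have hm0 : (0:ℝ) < m := lt_of_lt_of_le hu' hum
    set F : ℝ := (Nat.factorial (m+1) : ℝ) with hFdef
    have hF1 : (1:ℝ) ≤ F := by
      rw [hFdef]
      exact_mod_cast Nat.one_le_iff_ne_zero.mpr (Nat.factorial_ne_zero (m+1))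
    refine ⟨F, by linarith, fun n hn x hx => ?_⟩
    obtain ⟨hx0, hx1⟩ := hx
    have h1x : (0:ℝ) < 1 - x := by linarith
    have hn0 : (0:ℝ) < n := by exact_mod_cast hn
    set p : ℝ := (m:ℝ)/u with hpdef
    have hp1 : 1 ≤ p := (one_le_div hu').mpr hum
    have hp0 : 0 < p := by linarith
    set w : ℕ → ℝ := fun k => (n.choose k : ℝ) * x ^ k * (1-x) ^ (n-k) with hwdef
    set z : ℕ → ℝ := fun k => if k ∈ Ico 1 n then ((k:ℝ)/n) ^ (-u) else 0 with hzdef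
    have hw : ∀ k ∈ range (n+1), 0 ≤ w k := fun k _ => by
      simp only [hwdef]; positivity
    have hw' : ∑ k ∈ range (n+1), w k = 1 := my_bern_sum n x
    have hz : ∀ k ∈ range (n+1), 0 ≤ z k := fun k _ => by
      simp only [hzdef]
      split
      · positivity
      · exact le_refl 0
    have J := Real.arith_mean_le_rpow_mean (range (n+1)) w z hw hw' hz hp1
    -- identify LHS
    have hsub : Ico 1 n ⊆ range (n+1) := by
      intro k hk; simp only [mem_Ico, mem_range] at *; omega
    have hL : ∑ k ∈ range (n+1), w k * z k
        = ∑ k ∈ Ico 1 n, ((k:ℝ)/n) ^ (-u) * (n.choose k : ℝ) * x ^ k * (1-x) ^ (n-k) := by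
      rw [← Finset.sum_subset hsub (fun k _ hk => by
        simp only [hzdef]; rw [if_neg hk, mul_zero])]
      refine Finset.sum_congr rfl fun k hk => ?_
      simp only [hzdef, hwdef, if_pos hk]
      ring
    -- identify RHS inner sum
    have hR : ∑ k ∈ range (n+1), w k * z k ^ p
        = ∑ k ∈ Ico 1 n, ((n:ℝ)/k) ^ m * (n.choose k : ℝ) * x ^ k * (1-x) ^ (n-k) := by
      rw [← Finset.sum_subset hsub (fun k _ hk => by
        simp only [hzdef]; rw [if_neg hk, Real.zero_rpow (ne_of_gt hp0), mul_zero])]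
      refine Finset.sum_congr rfl fun k hk => ?_
      simp only [mem_Ico] at hk
      have hk0 : (0:ℝ) < k := by exact_mod_cast hk.1
      have hkn : (0:ℝ) ≤ (k:ℝ)/n := by positivity
      have hzp : z k ^ p = ((n:ℝ)/k) ^ m := by
        simp only [hzdef, if_pos (Finset.mem_Ico.mpr hk)]
        rw [← Real.rpow_natCast (((n:ℝ))/k) m]
        rw [← Real.rpow_mul hkn]
        have : -u * p = -(m:ℝ) := by
          rw [hpdef]; field_simp
        rw [this]
        rw [Real.rpow_neg hkn, ← Real.inv_rpow hkn, inv_div]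
      rw [hzp]
      simp only [hwdef]; ring
    have hxu : (0:ℝ) < x ^ u := Real.rpow_pos_of_pos hx0 u
    have h1p : 1/p = u/(m:ℝ) := by rw [hpdef, one_div_div]
    have hMom : ∑ k ∈ range (n+1), w k * z k ^ p ≤ F / x ^ m := by
      rw [hR]; exact my_moment n m x hx0 hx1
    have hS0 : 0 ≤ ∑ k ∈ range (n+1), w k * z k ^ p := by
      apply Finset.sum_nonneg
      intro k hk
      have := hz k hk
      have := hw k hk
      positivity
    calc ∑ k ∈ Ico 1 n, ((k:ℝ)/n) ^ (-u) * (n.choose k : ℝ) * x ^ k * (1-x) ^ (n-k)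
        = ∑ k ∈ range (n+1), w k * z k := hL.symm
      _ ≤ (∑ k ∈ range (n+1), w k * z k ^ p) ^ (1/p) := J
      _ ≤ (F / x ^ m) ^ (1/p) := Real.rpow_le_rpow hS0 hMom (by positivity)
      _ = F ^ (u/(m:ℝ)) / x ^ u := by
          rw [h1p, Real.div_rpow (by linarith) (by positivity)]
          congr 1
          rw [← Real.rpow_natCast x m, ← Real.rpow_mul hx0.le]
          congr 1
          field_simp
      _ ≤ F / x ^ u := by
          have hFle : F ^ (u/(m:ℝ)) ≤ F := by
            nth_rewrite 2 [← Real.rpow_one F]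
            exact Real.rpow_le_rpow_of_exponent_le hF1 (by rw [div_le_one hm0]; exact hum)
          exact (div_le_div_iff_of_pos_right hxu).mpr hFle
      _ = F * x ^ (-u) := by rw [Real.rpow_neg hx0.le, div_eq_mul_inv]


lemma my_single' (v : ℝ) (hv : 0 ≤ v) :
    ∃ C > 0, ∀ n : ℕ, 1 ≤ n → ∀ x ∈ Set.Ioo (0:ℝ) 1,
      ∑ k ∈ Ico 1 n, (1 - (k:ℝ)/n) ^ (-v) * (n.choose k : ℝ) * x ^ k * (1-x) ^ (n-k)
        ≤ C * (1-x) ^ (-v) := by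
  obtain ⟨C, hC, hB⟩ := my_single v hv
  refine ⟨C, hC, fun n hn x hx => ?_⟩
  obtain ⟨hx0, hx1⟩ := hx
  have hn0' : (n:ℝ) ≠ 0 := by positivity
  have hB' := hB n hn (1-x) ⟨by linarith, by linarith⟩
  have key : ∑ k ∈ Ico 1 n, (1 - (k:ℝ)/n) ^ (-v) * (n.choose k : ℝ) * x ^ k * (1-x) ^ (n-k)
      = ∑ j ∈ Ico 1 n, ((j:ℝ)/n) ^ (-v) * (n.choose j : ℝ) * (1-x) ^ j * (1-(1-x)) ^ (n-j) := by
    refine Finset.sum_nbij' (fun k => n - k) (fun j => n - j) ?_ ?_ ?_ ?_ ?_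
    · intro a ha; simp only [mem_Ico] at *; omega
    · intro a ha; simp only [mem_Ico] at *; omega
    · intro a ha; simp only [mem_Ico] at ha; omega
    · intro a ha; simp only [mem_Ico] at ha; omega
    · intro k hk
      simp only [mem_Ico] at hk
      have hkn : k ≤ n := hk.2.le
      have e1 : n - (n - k) = k := by omega
      have e2 : n.choose (n - k) = n.choose k := Nat.choose_symm hkn
      have e3 : ((n - k : ℕ):ℝ) = (n:ℝ) - k := Nat.cast_sub hkn
      rw [e1, e2, e3, sub_sub_cancel]
      have e4 : ((n:ℝ) - k)/n = 1 - (k:ℝ)/n := by field_simp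
      rw [e4]
      ring
  rw [key]
  exact hB'

lemma my_pointwise (u v : ℝ) (hu : 0 ≤ u) (hv : 0 ≤ v) (a : ℝ) (ha0 : 0 < a) (ha1 : a < 1) :
    a ^ (-u) * (1-a) ^ (-v) ≤ (2:ℝ) ^ v * a ^ (-u) + (2:ℝ) ^ u * (1-a) ^ (-v) := by
  have h1a : (0:ℝ) < 1 - a := by linarith
  have hau : (0:ℝ) ≤ a ^ (-u) := Real.rpow_nonneg ha0.le _
  have h1av : (0:ℝ) ≤ (1-a) ^ (-v) := Real.rpow_nonneg h1a.le _
  have h2u : (0:ℝ) ≤ (2:ℝ) ^ u := Real.rpow_nonneg (by norm_num) _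
  have h2v : (0:ℝ) ≤ (2:ℝ) ^ v := Real.rpow_nonneg (by norm_num) _
  rcases le_or_gt a (1/2) with h | h
  · have hb : (1-a)⁻¹ ≤ 2 := by
      rw [inv_le_comm₀ h1a (by norm_num)]
      linarith
    have : (1-a) ^ (-v) ≤ (2:ℝ) ^ v := by
      rw [Real.rpow_neg h1a.le, ← Real.inv_rpow h1a.le]
      exact Real.rpow_le_rpow (by positivity) hb hv
    nlinarith
  · have hb : a⁻¹ ≤ 2 := by
      rw [inv_le_comm₀ ha0 (by norm_num)]
      linarith
    have : a ^ (-u) ≤ (2:ℝ) ^ u := by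
      rw [Real.rpow_neg ha0.le, ← Real.inv_rpow ha0.le]
      exact Real.rpow_le_rpow (by positivity) hb hu
    nlinarith

theorem bernstein_weighted_moment_bound (u v : ℝ) (hu : 0 ≤ u) (hv : 0 ≤ v) :
    ∃ C > 0, ∀ n : ℕ, 2 ≤ n → ∀ x ∈ Set.Ioo (0:ℝ) 1,
      ∑ k ∈ Finset.Ico 1 n,
        ((k:ℝ)/n) ^ (-u) * (1 - (k:ℝ)/n) ^ (-v) * (n.choose k : ℝ) * x ^ k * (1-x) ^ (n-k)
      ≤ C * x ^ (-u) * (1-x) ^ (-v) := by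
  obtain ⟨Cu, hCu, hBu⟩ := my_single u hu
  obtain ⟨Cv, hCv, hBv⟩ := my_single' v hv
  have h2u : (0:ℝ) < (2:ℝ) ^ u := Real.rpow_pos_of_pos (by norm_num) _
  have h2v : (0:ℝ) < (2:ℝ) ^ v := Real.rpow_pos_of_pos (by norm_num) _
  refine ⟨(2:ℝ) ^ v * Cu + (2:ℝ) ^ u * Cv, by positivity, fun n hn x hx => ?_⟩
  obtain ⟨hx0, hx1⟩ := hx
  have h1x : (0:ℝ) < 1 - x := by linarith
  have hn1 : 1 ≤ n := by omega
  have hn0 : (0:ℝ) < n := by exact_mod_cast hn1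
  have hxu : (1:ℝ) ≤ x ^ (-u) := by
    rw [Real.rpow_neg hx0.le, one_le_inv_iff₀]
    exact ⟨Real.rpow_pos_of_pos hx0 u, Real.rpow_le_one hx0.le hx1.le hu⟩
  have hxv : (1:ℝ) ≤ (1-x) ^ (-v) := by
    rw [Real.rpow_neg h1x.le, one_le_inv_iff₀]
    exact ⟨Real.rpow_pos_of_pos h1x v, Real.rpow_le_one h1x.le (by linarith) hv⟩
  have hxu0 : (0:ℝ) ≤ x ^ (-u) := by linarith
  have hxv0 : (0:ℝ) ≤ (1-x) ^ (-v) := by linarith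
  calc ∑ k ∈ Finset.Ico 1 n,
        ((k:ℝ)/n) ^ (-u) * (1 - (k:ℝ)/n) ^ (-v) * (n.choose k : ℝ) * x ^ k * (1-x) ^ (n-k)
      ≤ ∑ k ∈ Finset.Ico 1 n,
        ((2:ℝ) ^ v * (((k:ℝ)/n) ^ (-u) * (n.choose k : ℝ) * x ^ k * (1-x) ^ (n-k))
          + (2:ℝ) ^ u * ((1 - (k:ℝ)/n) ^ (-v) * (n.choose k : ℝ) * x ^ k * (1-x) ^ (n-k))) := by
        apply Finset.sum_le_sum
        intro k hk
        simp only [mem_Ico] at hk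
        have hk0 : (0:ℝ) < k := by exact_mod_cast hk.1
        have ha0 : (0:ℝ) < (k:ℝ)/n := by positivity
        have ha1 : (k:ℝ)/n < 1 := by
          rw [div_lt_one hn0]; exact_mod_cast hk.2
        have hp := my_pointwise u v hu hv ((k:ℝ)/n) ha0 ha1
        have hw0 : (0:ℝ) ≤ (n.choose k : ℝ) * x ^ k * (1-x) ^ (n-k) := by positivity
        calc ((k:ℝ)/n) ^ (-u) * (1 - (k:ℝ)/n) ^ (-v) * (n.choose k : ℝ) * x ^ k * (1-x) ^ (n-k)
            = (((k:ℝ)/n) ^ (-u) * (1 - (k:ℝ)/n) ^ (-v)) *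
              ((n.choose k : ℝ) * x ^ k * (1-x) ^ (n-k)) := by ring
          _ ≤ ((2:ℝ) ^ v * ((k:ℝ)/n) ^ (-u) + (2:ℝ) ^ u * (1 - (k:ℝ)/n) ^ (-v)) *
              ((n.choose k : ℝ) * x ^ k * (1-x) ^ (n-k)) :=
              mul_le_mul_of_nonneg_right hp hw0
          _ = (2:ℝ) ^ v * (((k:ℝ)/n) ^ (-u) * (n.choose k : ℝ) * x ^ k * (1-x) ^ (n-k))
              + (2:ℝ) ^ u * ((1 - (k:ℝ)/n) ^ (-v) * (n.choose k : ℝ) * x ^ k * (1-x) ^ (n-k)) := by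
              ring
    _ = (2:ℝ) ^ v * ∑ k ∈ Finset.Ico 1 n,
          (((k:ℝ)/n) ^ (-u) * (n.choose k : ℝ) * x ^ k * (1-x) ^ (n-k))
        + (2:ℝ) ^ u * ∑ k ∈ Finset.Ico 1 n,
          ((1 - (k:ℝ)/n) ^ (-v) * (n.choose k : ℝ) * x ^ k * (1-x) ^ (n-k)) := by
        rw [Finset.sum_add_distrib, Finset.mul_sum, Finset.mul_sum]
    _ ≤ (2:ℝ) ^ v * (Cu * x ^ (-u)) + (2:ℝ) ^ u * (Cv * (1-x) ^ (-v)) := by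
        have h1 := hBu n hn1 x ⟨hx0, hx1⟩
        have h2 := hBv n hn1 x ⟨hx0, hx1⟩
        have s1nonneg : (0:ℝ) ≤ ∑ k ∈ Finset.Ico 1 n,
            (((k:ℝ)/n) ^ (-u) * (n.choose k : ℝ) * x ^ k * (1-x) ^ (n-k)) := by
          apply Finset.sum_nonneg; intro k hk; positivity
        gcongr
    _ ≤ (2:ℝ) ^ v * (Cu * (x ^ (-u) * (1-x) ^ (-v))) + (2:ℝ) ^ u * (Cv * (x ^ (-u) * (1-x) ^ (-v))) := by
        gcongr
        · nlinarith
        · nlinarith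
    _ = ((2:ℝ) ^ v * Cu + (2:ℝ) ^ u * Cv) * x ^ (-u) * (1-x) ^ (-v) := by ring
end

section
/- Let w(x) = x^α(1-x)^β with α, β > 0 and let f ∈ C_w, i.e. f is continuous on (0,1) and w·f extends continuously to [0,1] with value 0 at the endpoints. Then for every n ≥ 1, sup_{x ∈ (0,1)} w(x) · Σ_{k=1}^{n-1} |f(k/n)| p_{n,k}(x) ≤ C ‖w f‖_∞ for a constant C depending only on α, β, where ‖w f‖_∞ = sup_{x∈(0,1)} |w(x) f(x)|. -/
open Finset Real

lemma choose_ratio (n k : ℕ) : ∀ m : ℕ, (((n+m).choose (k+m) : ℝ)) =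
    (n.choose k : ℝ) * ∏ j ∈ Finset.range m, (((n:ℝ)+j+1)/((k:ℝ)+j+1))
  | 0 => by simp
  | (m+1) => by
    have h := Nat.add_one_mul_choose_eq (n+m) (k+m)
    have hcast : ((n:ℝ)+m+1) * (((n+m).choose (k+m) : ℕ) : ℝ)
        = (((n+m+1).choose (k+m+1) : ℕ) : ℝ) * ((k:ℝ)+m+1) := by
      exact_mod_cast congrArg (Nat.cast (R := ℝ)) h
    have hne : ((k:ℝ)+m+1) ≠ 0 := by positivity
    have heq : (((n+(m+1)).choose (k+(m+1)) : ℕ) : ℝ)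
        = (((n+m).choose (k+m) : ℕ) : ℝ) * (((n:ℝ)+m+1)/((k:ℝ)+m+1)) := by
      have : n+(m+1) = (n+m)+1 := by omega
      rw [this, (by omega : k+(m+1) = (k+m)+1)]
      field_simp
      linarith [hcast]
    rw [heq, choose_ratio n k m, Finset.prod_range_succ]
    ring

lemma sum_shift_le (n m : ℕ) (x : ℝ) (hx0 : 0 < x) (hx1 : x < 1) :
    ∑ k ∈ Finset.Ico 1 n, (((n+m).choose (k+m) : ℝ) * x^(k+m) * (1-x)^(n-k)) ≤ 1 := by
  have key : ∀ k ∈ Finset.Ico 1 n, ((n+m).choose (k+m) : ℝ) * x^(k+m) * (1-x)^(n-k)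
      = (fun K => x^K * (1-x)^(n+m-K) * ((n+m).choose K : ℝ)) (k+m) := by
    intro k hk
    simp only []
    rw [Nat.add_sub_add_right]
    ring
  rw [Finset.sum_congr rfl key]
  have himg : ∑ K ∈ (Finset.Ico 1 n).image (fun k => k + m),
      (x^K * (1-x)^(n+m-K) * ((n+m).choose K : ℝ))
      = ∑ k ∈ Finset.Ico 1 n, (x^(k+m) * (1-x)^(n+m-(k+m)) * ((n+m).choose (k+m) : ℝ)) :=
    Finset.sum_image (by intro a _ b _ h; simp only at h; omega)
  rw [← himg]
  have hsub : (Finset.Ico 1 n).image (fun k => k + m) ⊆ Finset.range (n+m+1) := by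
    intro K hK
    simp only [Finset.mem_image, Finset.mem_Ico] at hK
    obtain ⟨k, ⟨_, hk2⟩, rfl⟩ := hK
    simp only [Finset.mem_range]; omega
  have h1x : (0:ℝ) ≤ 1 - x := by linarith
  calc ∑ K ∈ (Finset.Ico 1 n).image (fun k => k + m), x^K * (1-x)^(n+m-K) * ((n+m).choose K : ℝ)
      ≤ ∑ K ∈ Finset.range (n+m+1), x^K * (1-x)^(n+m-K) * ((n+m).choose K : ℝ) := by
        apply Finset.sum_le_sum_of_subset_of_nonneg hsub
        intro K _ _; positivity
    _ = (x + (1-x))^(n+m) := (add_pow x (1-x) (n+m)).symm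
    _ = 1 := by norm_num

lemma bern_moment (m n : ℕ) (x : ℝ) (hx0 : 0 < x) (hx1 : x < 1) :
    ∑ k ∈ Finset.Ico 1 n, (n.choose k : ℝ) * x^k * (1-x)^(n-k) * (((n:ℝ)*x)/k)^m
      ≤ ((m:ℝ)+1)^m := by
  have h1x : (0:ℝ) ≤ 1 - x := by linarith
  have hm1 : (0:ℝ) ≤ (m:ℝ)+1 := by positivity
  calc ∑ k ∈ Finset.Ico 1 n, (n.choose k : ℝ) * x^k * (1-x)^(n-k) * (((n:ℝ)*x)/k)^m
      ≤ ∑ k ∈ Finset.Ico 1 n, ((m:ℝ)+1)^m * (((n+m).choose (k+m) : ℝ) * x^(k+m) * (1-x)^(n-k)) := by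
        apply Finset.sum_le_sum
        intro k hk
        simp only [Finset.mem_Ico] at hk
        obtain ⟨hk1, hkn⟩ := hk
        have hk0 : (0:ℝ) < k := by exact_mod_cast hk1
        have hk1' : (1:ℝ) ≤ k := by exact_mod_cast hk1
        have hn0 : (0:ℝ) ≤ n := Nat.cast_nonneg n
        -- ratio bound
        have hratio : ((n:ℝ)/k)^m ≤ ((m:ℝ)+1)^m * ∏ j ∈ Finset.range m, (((n:ℝ)+j+1)/((k:ℝ)+j+1)) := by
          have hprod : ((m:ℝ)+1)^m * ∏ j ∈ Finset.range m, (((n:ℝ)+j+1)/((k:ℝ)+j+1))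
              = ∏ j ∈ Finset.range m, (((m:ℝ)+1) * (((n:ℝ)+j+1)/((k:ℝ)+j+1))) := by
            rw [Finset.prod_mul_distrib, Finset.prod_const, Finset.card_range]
          rw [hprod]
          have hpow : ((n:ℝ)/k)^m = ∏ _j ∈ Finset.range m, ((n:ℝ)/k) := by
            rw [Finset.prod_const, Finset.card_range]
          rw [hpow]
          apply Finset.prod_le_prod
          · intro j _; positivity
          · intro j hj
            simp only [Finset.mem_range] at hj
            have hj1 : (j:ℝ)+1 ≤ m := by exact_mod_cast Nat.succ_le_of_lt hj
            have hj0 : (0:ℝ) ≤ j := Nat.cast_nonneg j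
            have hkj : (0:ℝ) < (k:ℝ)+j+1 := by positivity
            have hre : ((m:ℝ)+1) * (((n:ℝ)+j+1)/((k:ℝ)+j+1)) = (((m:ℝ)+1)*((n:ℝ)+j+1))/((k:ℝ)+j+1) := by ring
            rw [hre, div_le_div_iff₀ hk0 hkj]
            nlinarith [mul_nonneg (sub_nonneg.mpr hj1) hn0,
              mul_nonneg (sub_nonneg.mpr hk1') (mul_nonneg (Nat.cast_nonneg m) hn0),
              mul_nonneg (mul_nonneg (Nat.cast_nonneg m) hj0) hk0.le,
              mul_nonneg (Nat.cast_nonneg m) hk0.le, mul_nonneg hj0 hk0.le]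
        have hterm : (n.choose k : ℝ) * x^k * (1-x)^(n-k) * (((n:ℝ)*x)/k)^m
            = ((n:ℝ)/k)^m * ((n.choose k : ℝ) * x^(k+m) * (1-x)^(n-k)) := by
          rw [div_pow, mul_pow, pow_add]
          field_simp
          have hkk : (k:ℝ)^m * ((k:ℝ)⁻¹)^m = 1 := by rw [← mul_pow, mul_inv_cancel₀ hk0.ne', one_pow]
          linear_combination (-((n.choose k : ℝ) * (n:ℝ)^m * (1-x)^(n-k))) * hkk
        rw [hterm]
        have hrhs : ((m:ℝ)+1)^m * (((n+m).choose (k+m) : ℝ) * x^(k+m) * (1-x)^(n-k))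
            = (((m:ℝ)+1)^m * ∏ j ∈ Finset.range m, (((n:ℝ)+j+1)/((k:ℝ)+j+1)))
              * ((n.choose k : ℝ) * x^(k+m) * (1-x)^(n-k)) := by
          rw [choose_ratio n k m]; ring
        rw [hrhs]
        apply mul_le_mul_of_nonneg_right hratio
        positivity
    _ = ((m:ℝ)+1)^m * ∑ k ∈ Finset.Ico 1 n, (((n+m).choose (k+m) : ℝ) * x^(k+m) * (1-x)^(n-k)) := by
        rw [Finset.mul_sum]
    _ ≤ ((m:ℝ)+1)^m * 1 := by
        apply mul_le_mul_of_nonneg_left (sum_shift_le n m x hx0 hx1) (by positivity)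
    _ = ((m:ℝ)+1)^m := mul_one _

noncomputable def Dconst (γ : ℝ) : ℝ := 1 + ((⌈γ⌉₊ : ℝ)+1)^(⌈γ⌉₊ : ℕ)

lemma Dconst_pos (γ : ℝ) : 0 < Dconst γ := by
  unfold Dconst; positivity

lemma bern_moment_rpow (γ : ℝ) (hγ : 0 ≤ γ) (n : ℕ) (x : ℝ) (hx0 : 0 < x) (hx1 : x < 1) :
    ∑ k ∈ Finset.Ico 1 n, (n.choose k : ℝ) * x^k * (1-x)^(n-k) * (((n:ℝ)*x)/k)^γ
      ≤ Dconst γ := by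
  set m := ⌈γ⌉₊ with hm
  have h1x : (0:ℝ) ≤ 1 - x := by linarith
  have step : ∀ k ∈ Finset.Ico 1 n,
      (n.choose k : ℝ) * x^k * (1-x)^(n-k) * (((n:ℝ)*x)/k)^γ
      ≤ (n.choose k : ℝ) * x^k * (1-x)^(n-k) * 1
        + (n.choose k : ℝ) * x^k * (1-x)^(n-k) * (((n:ℝ)*x)/k)^m := by
    intro k hk
    simp only [Finset.mem_Ico] at hk
    have hk0 : (0:ℝ) < k := by exact_mod_cast hk.1
    have hn0 : (0:ℝ) < n := by exact_mod_cast lt_of_le_of_lt (Nat.zero_le _) hk.2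
    have ht0 : (0:ℝ) < ((n:ℝ)*x)/k := by positivity
    have hp0 : (0:ℝ) ≤ (n.choose k : ℝ) * x^k * (1-x)^(n-k) := by positivity
    have hcase : (((n:ℝ)*x)/k)^γ ≤ 1 + (((n:ℝ)*x)/k)^m := by
      rcases le_or_gt (((n:ℝ)*x)/k) 1 with h | h
      · have := Real.rpow_le_one ht0.le h hγ
        have hnn : (0:ℝ) ≤ (((n:ℝ)*x)/k)^m := by positivity
        linarith
      · have h1 : (((n:ℝ)*x)/k)^γ ≤ (((n:ℝ)*x)/k)^((m:ℝ)) :=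
          Real.rpow_le_rpow_of_exponent_le h.le (Nat.le_ceil γ)
        rw [Real.rpow_natCast] at h1
        linarith
    calc (n.choose k : ℝ) * x^k * (1-x)^(n-k) * (((n:ℝ)*x)/k)^γ
        ≤ (n.choose k : ℝ) * x^k * (1-x)^(n-k) * (1 + (((n:ℝ)*x)/k)^m) :=
          mul_le_mul_of_nonneg_left hcase hp0
      _ = _ := by ring
  calc ∑ k ∈ Finset.Ico 1 n, (n.choose k : ℝ) * x^k * (1-x)^(n-k) * (((n:ℝ)*x)/k)^γ
      ≤ ∑ k ∈ Finset.Ico 1 n, ((n.choose k : ℝ) * x^k * (1-x)^(n-k) * 1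
        + (n.choose k : ℝ) * x^k * (1-x)^(n-k) * (((n:ℝ)*x)/k)^m) := Finset.sum_le_sum step
    _ = ∑ k ∈ Finset.Ico 1 n, (n.choose k : ℝ) * x^k * (1-x)^(n-k) * 1
        + ∑ k ∈ Finset.Ico 1 n, (n.choose k : ℝ) * x^k * (1-x)^(n-k) * (((n:ℝ)*x)/k)^m :=
          Finset.sum_add_distrib
    _ ≤ 1 + ((m:ℝ)+1)^m := by
        have h0 := bern_moment 0 n x hx0 hx1
        simp only [pow_zero, Nat.cast_zero] at h0
        norm_num at h0
        have h1 := bern_moment m n x hx0 hx1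
        have : ∑ k ∈ Finset.Ico 1 n, (n.choose k : ℝ) * x^k * (1-x)^(n-k) * 1
            = ∑ k ∈ Finset.Ico 1 n, (n.choose k : ℝ) * x^k * (1-x)^(n-k) := by
          simp
        rw [this]
        exact add_le_add h0 h1
    _ = Dconst γ := rfl

lemma bern_moment_rpow' (γ : ℝ) (hγ : 0 ≤ γ) (n : ℕ) (x : ℝ) (hx0 : 0 < x) (hx1 : x < 1) :
    ∑ k ∈ Finset.Ico 1 n, (n.choose k : ℝ) * x^k * (1-x)^(n-k) * (((n:ℝ)*(1-x))/((n-k : ℕ) : ℝ))^γ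
      ≤ Dconst γ := by
  have h1x0 : (0:ℝ) < 1 - x := by linarith
  have h1x1 : 1 - x < 1 := by linarith
  have key : ∑ k ∈ Finset.Ico 1 n, (n.choose k : ℝ) * x^k * (1-x)^(n-k) * (((n:ℝ)*(1-x))/((n-k : ℕ) : ℝ))^γ
      = ∑ k ∈ Finset.Ico 1 n, (n.choose k : ℝ) * (1-x)^k * (1-(1-x))^(n-k) * (((n:ℝ)*(1-x))/k)^γ := by
    apply Finset.sum_nbij' (i := fun k => n - k) (j := fun k => n - k)
    · intro a ha; simp only [Finset.mem_Ico] at *; omega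
    · intro a ha; simp only [Finset.mem_Ico] at *; omega
    · intro a ha; simp only [Finset.mem_Ico] at ha; omega
    · intro a ha; simp only [Finset.mem_Ico] at ha; omega
    · intro a ha
      simp only [Finset.mem_Ico] at ha
      have h1 : n - (n - a) = a := by omega
      have h2 : n.choose a = n.choose (n - a) := (Nat.choose_symm ha.2.le).symm
      rw [h1, sub_sub_cancel, h2]
      ring
  rw [key]
  exact bern_moment_rpow γ hγ n (1-x) h1x0 h1x1

theorem weighted_truncated_bernstein_bound (α β : ℝ) (hα : 0 < α) (hβ : 0 < β) :
    ∃ C > 0, ∀ f : ℝ → ℝ, ContinuousOn f (Set.Ioo 0 1) →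
      Filter.Tendsto (fun y => y^α*(1-y)^β * f y) (nhdsWithin 0 (Set.Ioo 0 1)) (nhds 0) →
      Filter.Tendsto (fun y => y^α*(1-y)^β * f y) (nhdsWithin 1 (Set.Ioo 0 1)) (nhds 0) →
      ∀ n : ℕ, 1 ≤ n → ∀ x ∈ Set.Ioo (0:ℝ) 1,
        x^α*(1-x)^β * ∑ k ∈ Finset.Ico 1 n,
            |f ((k:ℝ)/n)| * (n.choose k : ℝ) * x^k * (1-x)^(n-k)
          ≤ C * sSup ((fun y => |y^α*(1-y)^β * f y|) '' Set.Ioo (0:ℝ) 1) := by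
  refine ⟨Real.sqrt (Dconst (2*α)) * Real.sqrt (Dconst (2*β)), ?_, ?_⟩
  · have h1 := Dconst_pos (2*α); have h2 := Dconst_pos (2*β)
    positivity
  intro f hf h0lim h1lim n hn x hx
  obtain ⟨hx0, hx1⟩ := hx
  set g : ℝ → ℝ := fun y => y^α*(1-y)^β * f y with hg
  -- continuity of g on [0,1]
  have hgIoo : ∀ y ∈ Set.Ioo (0:ℝ) 1, ContinuousWithinAt g (Set.Icc 0 1) y := by
    intro y hy
    have c1 : ContinuousAt (fun y : ℝ => y^α) y :=
      Real.continuousAt_rpow_const y α (Or.inl hy.1.ne')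
    have c2 : ContinuousAt (fun y : ℝ => (1-y)^β) y := by
      have hne : (1:ℝ) - y ≠ 0 := by have := hy.2; intro h; linarith [sub_eq_zero.mp h]
      exact (Real.continuousAt_rpow_const (1-y) β (Or.inl hne)).comp
        ((continuous_const.sub continuous_id).continuousAt)
    have c3 : ContinuousWithinAt f (Set.Ioo 0 1) y := hf y hy
    have cw : ContinuousWithinAt g (Set.Ioo 0 1) y :=
      (c1.continuousWithinAt.mul c2.continuousWithinAt).mul c3
    exact cw.mono_of_mem_nhdsWithin (mem_nhdsWithin_of_mem_nhds (isOpen_Ioo.mem_nhds hy))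
  have hsub : Set.Icc (0:ℝ) 1 ⊆ Set.Ioo 0 1 ∪ {0, 1} := by
    intro y hy
    rcases eq_or_ne y 0 with rfl | h0
    · right; simp
    rcases eq_or_ne y 1 with rfl | h1
    · right; simp
    · exact Or.inl ⟨lt_of_le_of_ne hy.1 (Ne.symm h0), lt_of_le_of_ne hy.2 h1⟩
  have hg0 : g 0 = 0 := by simp [hg, Real.zero_rpow hα.ne']
  have hg1 : g 1 = 0 := by simp [hg, Real.zero_rpow hβ.ne']
  have hcont : ContinuousOn g (Set.Icc 0 1) := by
    intro y hy
    rcases eq_or_ne y 0 with rfl | hy0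
    · unfold ContinuousWithinAt
      rw [hg0]
      refine Filter.Tendsto.mono_left ?_ (nhdsWithin_mono _ hsub)
      rw [nhdsWithin_union, Filter.tendsto_sup]
      constructor
      · exact h0lim
      · refine tendsto_const_nhds.congr' ?_
        filter_upwards [self_mem_nhdsWithin,
          nhdsWithin_le_nhds (Iio_mem_nhds (zero_lt_one (α := ℝ)))] with y hy1 hy2
        rcases hy1 with rfl | h1
        · exact hg0.symm
        · simp only [Set.mem_singleton_iff] at h1
          subst h1; exact absurd hy2 (by simp)
    rcases eq_or_ne y 1 with rfl | hy1
    · unfold ContinuousWithinAt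
      rw [hg1]
      refine Filter.Tendsto.mono_left ?_ (nhdsWithin_mono _ hsub)
      rw [nhdsWithin_union, Filter.tendsto_sup]
      constructor
      · exact h1lim
      · refine tendsto_const_nhds.congr' ?_
        filter_upwards [self_mem_nhdsWithin,
          nhdsWithin_le_nhds (Ioi_mem_nhds (zero_lt_one (α := ℝ)))] with y hy1 hy2
        rcases hy1 with rfl | h1
        · exact absurd hy2 (by simp)
        · simp only [Set.mem_singleton_iff] at h1
          subst h1; exact hg1.symm
    · exact hgIoo y ⟨lt_of_le_of_ne hy.1 (Ne.symm hy0), lt_of_le_of_ne hy.2 hy1⟩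
  -- boundedness
  have hbdd : BddAbove ((fun y => |g y|) '' Set.Ioo (0:ℝ) 1) :=
    BddAbove.mono (Set.image_mono Set.Ioo_subset_Icc_self)
      (isCompact_Icc.bddAbove_image hcont.abs)
  set M := sSup ((fun y => |y^α*(1-y)^β * f y|) '' Set.Ioo (0:ℝ) 1) with hM
  have hMdef : M = sSup ((fun y => |g y|) '' Set.Ioo (0:ℝ) 1) := rfl
  have hMb : ∀ y ∈ Set.Ioo (0:ℝ) 1, |g y| ≤ M := by
    intro y hy
    rw [hMdef]
    exact le_csSup hbdd ⟨y, hy, rfl⟩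
  have hM0 : 0 ≤ M :=
    le_trans (abs_nonneg _) (hMb (1/2) (by norm_num))
  -- notation for the proof
  set p : ℕ → ℝ := fun k => (n.choose k : ℝ) * x^k * (1-x)^(n-k) with hp
  set A : ℕ → ℝ := fun k => (((n:ℝ)*x)/k)^α with hA
  set B : ℕ → ℝ := fun k => (((n:ℝ)*(1-x))/((n-k : ℕ) : ℝ))^β with hB
  have h1x : (0:ℝ) < 1 - x := by linarith
  -- termwise bound
  have hterm : ∀ k ∈ Finset.Ico 1 n,
      x^α*(1-x)^β * (|f ((k:ℝ)/n)| * (n.choose k : ℝ) * x^k * (1-x)^(n-k))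
        ≤ M * (p k * A k * B k) := by
    intro k hk
    simp only [Finset.mem_Ico] at hk
    obtain ⟨hk1, hkn⟩ := hk
    have hn0 : (0:ℝ) < n := by exact_mod_cast lt_of_le_of_lt (Nat.zero_le _) hkn
    have hk0 : (0:ℝ) < k := by exact_mod_cast hk1
    have hnk0 : (0:ℝ) < ((n-k : ℕ) : ℝ) := by
      have : 0 < n - k := by omega
      exact_mod_cast this
    have hcast : ((n - k : ℕ) : ℝ) = (n:ℝ) - k := Nat.cast_sub hkn.le
    have hknR : (k:ℝ) < n := by exact_mod_cast hkn
    have hmem : (k:ℝ)/n ∈ Set.Ioo (0:ℝ) 1 := by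
      constructor
      · positivity
      · rw [div_lt_one hn0]; exact hknR
    have ht1 : (0:ℝ) < ((n:ℝ)*x)/k := by positivity
    have ht2 : (0:ℝ) < ((n:ℝ)*(1-x))/((n-k : ℕ) : ℝ) := by positivity
    have hA0 : 0 ≤ A k := Real.rpow_nonneg ht1.le α
    have hB0 : 0 ≤ B k := Real.rpow_nonneg ht2.le β
    have hp0 : 0 ≤ p k := by
      simp only [hp]; positivity
    have key1 : A k * ((k:ℝ)/n)^α = x^α := by
      rw [hA]
      rw [← Real.mul_rpow ht1.le (by positivity)]
      congr 1
      field_simp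
    have key2 : B k * (1-(k:ℝ)/n)^β = (1-x)^β := by
      have h1kn : 1 - (k:ℝ)/n = ((n-k : ℕ) : ℝ)/n := by
        rw [hcast]; field_simp
      rw [hB, h1kn, ← Real.mul_rpow ht2.le (by positivity)]
      congr 1
      field_simp
    have hwf : ((k:ℝ)/n)^α * (1-(k:ℝ)/n)^β * |f ((k:ℝ)/n)| ≤ M := by
      have := hMb ((k:ℝ)/n) hmem
      have hwpos : 0 ≤ ((k:ℝ)/n)^α * (1-(k:ℝ)/n)^β :=
        mul_nonneg (Real.rpow_nonneg (by positivity) α)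
          (Real.rpow_nonneg (by linarith [hmem.2] : (0:ℝ) ≤ 1 - (k:ℝ)/n) β)
      calc ((k:ℝ)/n)^α * (1-(k:ℝ)/n)^β * |f ((k:ℝ)/n)|
          = |g ((k:ℝ)/n)| := by
            rw [hg]
            simp only []
            rw [abs_mul, abs_of_nonneg hwpos]
        _ ≤ M := this
    have heq : x^α*(1-x)^β * (|f ((k:ℝ)/n)| * (n.choose k : ℝ) * x^k * (1-x)^(n-k))
        = (A k * B k) * (((k:ℝ)/n)^α * (1-(k:ℝ)/n)^β * |f ((k:ℝ)/n)|) * p k := by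
      rw [← key1, ← key2, hp]
      ring
    rw [heq]
    calc (A k * B k) * (((k:ℝ)/n)^α * (1-(k:ℝ)/n)^β * |f ((k:ℝ)/n)|) * p k
        ≤ (A k * B k) * M * p k := by
          apply mul_le_mul_of_nonneg_right _ hp0
          exact mul_le_mul_of_nonneg_left hwf (mul_nonneg hA0 hB0)
      _ = M * (p k * A k * B k) := by ring
  -- Cauchy-Schwarz
  have hsumA : ∑ k ∈ Finset.Ico 1 n, p k * (A k)^2 ≤ Dconst (2*α) := by
    have hcongr : ∀ k ∈ Finset.Ico 1 n, p k * (A k)^2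
        = (n.choose k : ℝ) * x^k * (1-x)^(n-k) * (((n:ℝ)*x)/k)^(2*α) := by
      intro k hk
      simp only [Finset.mem_Ico] at hk
      have hn0 : (0:ℝ) < n := by exact_mod_cast lt_of_le_of_lt (Nat.zero_le _) hk.2
      have hk0 : (0:ℝ) < k := by exact_mod_cast hk.1
      have ht1 : (0:ℝ) < ((n:ℝ)*x)/k := by positivity
      have : (A k)^2 = (((n:ℝ)*x)/k)^(2*α) := by
        rw [hA, sq, ← Real.rpow_add ht1, two_mul]
      rw [this, hp]
    rw [Finset.sum_congr rfl hcongr]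
    exact bern_moment_rpow (2*α) (by positivity) n x hx0 hx1
  have hsumB : ∑ k ∈ Finset.Ico 1 n, p k * (B k)^2 ≤ Dconst (2*β) := by
    have hcongr : ∀ k ∈ Finset.Ico 1 n, p k * (B k)^2
        = (n.choose k : ℝ) * x^k * (1-x)^(n-k) * (((n:ℝ)*(1-x))/((n-k : ℕ) : ℝ))^(2*β) := by
      intro k hk
      simp only [Finset.mem_Ico] at hk
      have hn0 : (0:ℝ) < n := by exact_mod_cast lt_of_le_of_lt (Nat.zero_le _) hk.2
      have hnk0 : (0:ℝ) < ((n-k : ℕ) : ℝ) := by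
        have : 0 < n - k := by omega
        exact_mod_cast this
      have ht2 : (0:ℝ) < ((n:ℝ)*(1-x))/((n-k : ℕ) : ℝ) := by positivity
      have : (B k)^2 = (((n:ℝ)*(1-x))/((n-k : ℕ) : ℝ))^(2*β) := by
        rw [hB, sq, ← Real.rpow_add ht2, two_mul]
      rw [this, hp]
    rw [Finset.sum_congr rfl hcongr]
    exact bern_moment_rpow' (2*β) (by positivity) n x hx0 hx1
  have hCS : ∑ k ∈ Finset.Ico 1 n, p k * A k * B k
      ≤ Real.sqrt (Dconst (2*α)) * Real.sqrt (Dconst (2*β)) := by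
    have hstep : ∀ k ∈ Finset.Ico 1 n, p k * A k * B k
        = Real.sqrt (p k * (A k)^2) * Real.sqrt (p k * (B k)^2) := by
      intro k hk
      have hp0 : 0 ≤ p k := by simp only [hp]; positivity
      have hA0 : 0 ≤ A k := Real.rpow_nonneg (by positivity) α
      have hB0 : 0 ≤ B k := Real.rpow_nonneg (by positivity) β
      rw [← Real.sqrt_mul (by positivity)]
      have : (p k * (A k)^2) * (p k * (B k)^2) = (p k * A k * B k)^2 := by ring
      rw [this, Real.sqrt_sq (by positivity)]
    rw [Finset.sum_congr rfl hstep]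
    refine le_trans (Real.sum_sqrt_mul_sqrt_le _
      (fun k => by simp only [hp]; positivity)
      (fun k => by simp only [hp]; positivity)) ?_
    have h1 : Real.sqrt (∑ k ∈ Finset.Ico 1 n, p k * (A k)^2) ≤ Real.sqrt (Dconst (2*α)) :=
      Real.sqrt_le_sqrt hsumA
    have h2 : Real.sqrt (∑ k ∈ Finset.Ico 1 n, p k * (B k)^2) ≤ Real.sqrt (Dconst (2*β)) :=
      Real.sqrt_le_sqrt hsumB
    exact mul_le_mul h1 h2 (Real.sqrt_nonneg _) (Real.sqrt_nonneg _)
  -- conclude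
  calc x^α*(1-x)^β * ∑ k ∈ Finset.Ico 1 n,
        |f ((k:ℝ)/n)| * (n.choose k : ℝ) * x^k * (1-x)^(n-k)
      = ∑ k ∈ Finset.Ico 1 n,
        x^α*(1-x)^β * (|f ((k:ℝ)/n)| * (n.choose k : ℝ) * x^k * (1-x)^(n-k)) := by
        rw [Finset.mul_sum]
    _ ≤ ∑ k ∈ Finset.Ico 1 n, M * (p k * A k * B k) := Finset.sum_le_sum hterm
    _ = M * ∑ k ∈ Finset.Ico 1 n, p k * A k * B k := by rw [Finset.mul_sum]
    _ ≤ M * (Real.sqrt (Dconst (2*α)) * Real.sqrt (Dconst (2*β))) :=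
        mul_le_mul_of_nonneg_left hCS hM0
    _ = Real.sqrt (Dconst (2*α)) * Real.sqrt (Dconst (2*β)) * M := by ring
end

section
/- Let w(x) = x^α(1-x)^β with α, β > 0. For every r ≥ 1 there is C > 0 such that for all n ≥ 2 and x ∈ (0,1): Σ_{k=0}^{n−r} (w φ₂^r)^{-1}(k*/n) p_{n−r,k}(x) ≤ C (w(x) φ₂^r(x))^{-1}, where φ₂(x) = x^{β₀}(1-x)^{β₁} with β₀, β₁ ≥ 1/2, and k* = 1 if k = 0, k* = n−r−1 if k = n−r, and k* = k otherwise. -/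
set_option maxHeartbeats 1000000
open Finset Real

private noncomputable def Pb (m k : ℕ) (x : ℝ) : ℝ := (m.choose k : ℝ) * x^k * (1-x)^(m-k)

private lemma natL1 (k q j n r : ℕ) (hj : k + 1 ≤ 3 * j) (hn : n ≤ (r+1) * (k+q)) :
    ∀ s : ℕ, n^s * ((k+q).choose k) ≤ (3*(r+1))^s * s.factorial * j^s * ((k+q+s).choose (k+s)) := by
  intro s
  induction s with
  | zero => simp
  | succ s ih =>
    have hid : (k+q+s+1) * (k+q+s).choose (k+s) = (k+q+s+1).choose (k+s+1) * (k+s+1) := by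
      have := Nat.add_one_mul_choose_eq (k+q+s) (k+s)
      simpa [Nat.succ_eq_add_one] using this
    have key : n * (k+s+1) ≤ 3*(r+1)*(s+1) * j * (k+q+s+1) := by
      have h1 : k+s+1 ≤ (s+1)*(k+1) := by nlinarith
      have h2 : n * (k+s+1) ≤ ((r+1)*(k+q)) * ((s+1)*(3*j)) := by
        apply Nat.mul_le_mul hn (le_trans h1 (Nat.mul_le_mul_left _ hj))
      calc n * (k+s+1) ≤ ((r+1)*(k+q)) * ((s+1)*(3*j)) := h2
        _ ≤ ((r+1)*(k+q+s+1)) * ((s+1)*(3*j)) := by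
            apply Nat.mul_le_mul_right
            apply Nat.mul_le_mul_left
            omega
        _ = 3*(r+1)*(s+1) * j * (k+q+s+1) := by ring
    apply Nat.le_of_mul_le_mul_right _ (show 0 < k+s+1 by omega)
    calc n^(s+1) * ((k+q).choose k) * (k+s+1)
        = (n*(k+s+1)) * (n^s * ((k+q).choose k)) := by ring
      _ ≤ (3*(r+1)*(s+1)*j*(k+q+s+1)) * ((3*(r+1))^s * s.factorial * j^s * ((k+q+s).choose (k+s))) :=
          Nat.mul_le_mul key ih
      _ = (3*(r+1))^(s+1) * (s+1).factorial * j^(s+1) * ((k+q+s+1) * (k+q+s).choose (k+s)) := by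
          rw [pow_succ, pow_succ, Nat.factorial_succ]; ring
      _ = (3*(r+1))^(s+1) * (s+1).factorial * j^(s+1) * ((k+q+s+1).choose (k+s+1)) * (k+s+1) := by
          rw [hid]; ring

private lemma natL2 (k q d n r : ℕ) (hd : q + 1 ≤ 2 * d) (hn : n ≤ (r+1) * (k+q)) :
    ∀ s : ℕ, n^s * ((k+q).choose k) ≤ (2*(r+1))^s * s.factorial * d^s * ((k+q+s).choose k) := by
  intro s
  induction s with
  | zero => simp
  | succ s ih =>
    have hid : (k+q+s+1) * (k+q+s).choose k = (q+s+1) * (k+q+s+1).choose k := by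
      have h1 : (k+q+s).choose (q+s) = (k+q+s).choose k := by
        have := Nat.choose_symm (show k ≤ k+q+s by omega)
        simpa [show k+q+s-k = q+s by omega] using this
      have h2 : (k+q+s+1).choose (q+s+1) = (k+q+s+1).choose k := by
        have := Nat.choose_symm (show q+s+1 ≤ k+q+s+1 by omega)
        simpa [show k+q+s+1-(q+s+1) = k by omega] using this.symm
      have := Nat.add_one_mul_choose_eq (k+q+s) (q+s)
      rw [h1, h2] at this
      rw [this, Nat.mul_comm]
    have key : n * (q+s+1) ≤ 2*(r+1)*(s+1) * d * (k+q+s+1) := by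
      have h1 : q+s+1 ≤ (s+1)*(q+1) := by nlinarith
      have h2 : n * (q+s+1) ≤ ((r+1)*(k+q)) * ((s+1)*(2*d)) := by
        apply Nat.mul_le_mul hn (le_trans h1 (Nat.mul_le_mul_left _ hd))
      calc n * (q+s+1) ≤ ((r+1)*(k+q)) * ((s+1)*(2*d)) := h2
        _ ≤ ((r+1)*(k+q+s+1)) * ((s+1)*(2*d)) := by
            apply Nat.mul_le_mul_right
            apply Nat.mul_le_mul_left
            omega
        _ = 2*(r+1)*(s+1) * d * (k+q+s+1) := by ring
    apply Nat.le_of_mul_le_mul_right _ (show 0 < q+s+1 by omega)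
    calc n^(s+1) * ((k+q).choose k) * (q+s+1)
        = (n*(q+s+1)) * (n^s * ((k+q).choose k)) := by ring
      _ ≤ (2*(r+1)*(s+1)*d*(k+q+s+1)) * ((2*(r+1))^s * s.factorial * d^s * ((k+q+s).choose k)) :=
          Nat.mul_le_mul key ih
      _ = (2*(r+1))^(s+1) * (s+1).factorial * d^(s+1) * ((k+q+s+1) * (k+q+s).choose k) := by
          rw [pow_succ, pow_succ, Nat.factorial_succ]; ring
      _ = (2*(r+1))^(s+1) * (s+1).factorial * d^(s+1) * ((k+q+s+1).choose k) * (q+s+1) := by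
          rw [hid]; ring

private lemma rpow_le_one_add_pow {t u : ℝ} (ht : 0 < t) (hu : 0 ≤ u) {s : ℕ} (hus : u ≤ s) :
    t ^ u ≤ 1 + t ^ s := by
  rcases le_or_gt t 1 with h | h
  · have h1 : t ^ u ≤ 1 := Real.rpow_le_one ht.le h hu
    have h2 : (0:ℝ) ≤ t ^ s := by positivity
    linarith
  · have h1 : t ^ u ≤ t ^ (s:ℝ) := Real.rpow_le_rpow_of_exponent_le h.le hus
    rw [Real.rpow_natCast] at h1
    have h2 : (0:ℝ) ≤ 1 := zero_le_one
    linarith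

private lemma weight_eq (α β β₀ β₁ : ℝ) (r : ℕ) {a : ℝ} (h0 : 0 < a) (h1 : a < 1) :
    a^α * (1-a)^β * ((a^β₀)*(1-a)^β₁)^r = a^(α+β₀*r) * (1-a)^(β+β₁*r) := by
  have h1' : 0 < 1 - a := by linarith
  rw [mul_pow, ← Real.rpow_natCast (a^β₀) r, ← Real.rpow_natCast ((1-a)^β₁) r,
    ← Real.rpow_mul h0.le, ← Real.rpow_mul h1'.le,
    Real.rpow_add h0, Real.rpow_add h1']
  ring

private lemma Pb_nonneg (m k : ℕ) {x : ℝ} (h0 : 0 ≤ x) (h1 : x ≤ 1) : 0 ≤ Pb m k x := by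
  unfold Pb
  have h2 : (0:ℝ) ≤ 1 - x := by linarith
  positivity

private lemma sum_Pb2 (m : ℕ) (x : ℝ) : ∑ k ∈ range (m+1), Pb m k x = 1 := by
  have h : (x + (1-x))^m = ∑ k ∈ range (m+1), x^k * (1-x)^(m-k) * (m.choose k : ℝ) :=
    add_pow x (1-x) m
  simp only [add_sub_cancel, one_pow] at h
  unfold Pb
  calc ∑ k ∈ range (m+1), (m.choose k : ℝ) * x^k * (1-x)^(m-k)
      = ∑ k ∈ range (m+1), x^k * (1-x)^(m-k) * (m.choose k : ℝ) := by
        apply Finset.sum_congr rfl; intro k _; ring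
    _ = 1 := h.symm

private lemma sum_Pb_le (m M : ℕ) (h : m ≤ M) {x : ℝ} (h0 : 0 ≤ x) (h1 : x ≤ 1) :
    ∑ k ∈ range (m+1), Pb M k x ≤ 1 := by
  rw [← sum_Pb2 M x]
  apply Finset.sum_le_sum_of_subset_of_nonneg
  · exact Finset.range_subset_range.2 (by omega)
  · intro k _ _; exact Pb_nonneg _ _ h0 h1

private lemma sum_Pb_shift_le (m s M : ℕ) (h : m + s ≤ M) {x : ℝ} (h0 : 0 ≤ x) (h1 : x ≤ 1) :
    ∑ k ∈ range (m+1), Pb M (k+s) x ≤ 1 := by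
  rw [← sum_Pb2 M x]
  rw [show ∑ k ∈ range (m+1), Pb M (k+s) x
      = ∑ j ∈ (range (m+1)).image (· + s), Pb M j x by
    rw [Finset.sum_image]
    intro a _ b _ hab
    have hab' : a + s = b + s := hab
    omega]
  apply Finset.sum_le_sum_of_subset_of_nonneg
  · intro j hj
    simp only [Finset.mem_image, Finset.mem_range] at hj ⊢
    omega
  · intro k _ _; exact Pb_nonneg _ _ h0 h1

private lemma core (u v : ℝ) (hu : 0 < u) (hv : 0 < v) (s k q j d r : ℕ)
    (hus : u ≤ s) (hvs : v ≤ s)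
    (hj1 : 1 ≤ j) (hd1 : 1 ≤ d)
    (hj3 : k + 1 ≤ 3*j) (hd2 : q + 1 ≤ 2*d)
    (hn : j + d ≤ (r+1)*(k+q))
    {x : ℝ} (hx0 : 0 < x) (hx1 : x < 1) :
    (((j:ℝ)/((j:ℝ)+d))^u * ((d:ℝ)/((j:ℝ)+d))^v)⁻¹ * Pb (k+q) k x
      ≤ (x^u * (1-x)^v)⁻¹ *
        (Pb (k+q) k x
          + (3*((r:ℝ)+1))^s * s.factorial * Pb (k+q+s) (k+s) x
          + (2*((r:ℝ)+1))^s * s.factorial * Pb (k+q+s) k x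
          + ((3*((r:ℝ)+1))^s * s.factorial) * ((2*((r:ℝ)+1))^s * s.factorial) * Pb (k+q+2*s) (k+s) x) := by
  have hx1' : 0 < 1 - x := by linarith
  set n : ℝ := (j:ℝ) + d with hnr
  have hnpos : 0 < n := by positivity
  have hj0 : (0:ℝ) < j := by exact_mod_cast hj1
  have hd0 : (0:ℝ) < d := by exact_mod_cast hd1
  have ha0 : 0 < (j:ℝ)/n := by positivity
  have hb0 : 0 < (d:ℝ)/n := by positivity
  -- abbreviations
  set A : ℝ := (x / ((j:ℝ)/n))^s with hA
  set B : ℝ := ((1-x) / ((d:ℝ)/n))^s with hB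
  have hA0 : 0 ≤ A := by positivity
  have hB0 : 0 ≤ B := by positivity
  set KA : ℝ := (3*((r:ℝ)+1))^s * s.factorial with hKA
  set KB : ℝ := (2*((r:ℝ)+1))^s * s.factorial with hKB
  have hW : 0 < x^u * (1-x)^v := by positivity
  rw [show (x^u * (1-x)^v)⁻¹ *
        (Pb (k+q) k x + KA * Pb (k+q+s) (k+s) x + KB * Pb (k+q+s) k x
          + KA * KB * Pb (k+q+2*s) (k+s) x)
      = (Pb (k+q) k x + KA * Pb (k+q+s) (k+s) x + KB * Pb (k+q+s) k x
          + KA * KB * Pb (k+q+2*s) (k+s) x) / (x^u * (1-x)^v) from by ring,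
    le_div_iff₀ hW]
  have hPb0 : 0 ≤ Pb (k+q) k x := by
    unfold Pb
    positivity
  -- rewrite LHS as ratio powers
  have hmain : (((j:ℝ)/n)^u * ((d:ℝ)/n)^v)⁻¹ * Pb (k+q) k x * (x^u * (1-x)^v)
      = ((x/((j:ℝ)/n))^u * ((1-x)/((d:ℝ)/n))^v) * Pb (k+q) k x := by
    rw [Real.div_rpow hx0.le ha0.le, Real.div_rpow hx1'.le hb0.le]
    have e1 : ((j:ℝ)/n)^u ≠ 0 := (Real.rpow_pos_of_pos ha0 u).ne'
    have e2 : ((d:ℝ)/n)^v ≠ 0 := (Real.rpow_pos_of_pos hb0 v).ne'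
    field_simp
  rw [hmain]
  have hstep : ((x/((j:ℝ)/n))^u * ((1-x)/((d:ℝ)/n))^v) * Pb (k+q) k x
      ≤ (1 + A) * (1 + B) * Pb (k+q) k x := by
    apply mul_le_mul_of_nonneg_right _ hPb0
    have t1 : (x/((j:ℝ)/n))^u ≤ 1 + A :=
      rpow_le_one_add_pow (by positivity) hu.le hus
    have t2 : ((1-x)/((d:ℝ)/n))^v ≤ 1 + B :=
      rpow_le_one_add_pow (by positivity) hv.le hvs
    have p1 : 0 ≤ (x/((j:ℝ)/n))^u := (Real.rpow_pos_of_pos (by positivity) u).le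
    have p2 : 0 ≤ (1-x)/((d:ℝ)/n) := by positivity
    apply mul_le_mul t1 t2 ((Real.rpow_pos_of_pos (by positivity) v).le) (by positivity)
  refine le_trans hstep ?_
  rw [show (1 + A) * (1 + B) * Pb (k+q) k x
      = Pb (k+q) k x + A * Pb (k+q) k x + B * Pb (k+q) k x + A * (B * Pb (k+q) k x) from by ring]
  -- Now three estimates
  have cast1 : ((j:ℝ)+d)^s * ((k+q).choose k : ℝ)
      ≤ KA * (j:ℝ)^s * ((k+q+s).choose (k+s) : ℝ) := by
    have := natL1 k q j (j+d) r hj3 hn s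
    have h2 : (((j+d)^s * ((k+q).choose k) : ℕ) : ℝ)
        ≤ (((3*(r+1))^s * s.factorial * j^s * ((k+q+s).choose (k+s)) : ℕ) : ℝ) := by
      exact_mod_cast this
    push_cast at h2
    rw [hKA]; push_cast
    linarith [h2]
  have cast2 : ((j:ℝ)+d)^s * ((k+q).choose k : ℝ)
      ≤ KB * (d:ℝ)^s * ((k+q+s).choose k : ℝ) := by
    have := natL2 k q d (j+d) r hd2 hn s
    have h2 : (((j+d)^s * ((k+q).choose k) : ℕ) : ℝ)
        ≤ (((2*(r+1))^s * s.factorial * d^s * ((k+q+s).choose k) : ℕ) : ℝ) := by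
      exact_mod_cast this
    push_cast at h2
    rw [hKB]; push_cast
    linarith [h2]
  have cast3 : ((j:ℝ)+d)^(2*s) * ((k+q).choose k : ℝ)
      ≤ KA * KB * (j:ℝ)^s * (d:ℝ)^s * ((k+q+2*s).choose (k+s) : ℝ) := by
    have t1 := natL1 k q j (j+d) r hj3 hn s
    have t2 := natL2 (k+s) q d (j+d) r hd2 (by
      calc j + d ≤ (r+1)*(k+q) := hn
        _ ≤ (r+1)*(k+s+q) := by apply Nat.mul_le_mul_left; omega) s
    rw [show k+s+q+s = k+q+2*s from by ring, show k+s+q = k+q+s from by ring] at t2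
    have comb : (j+d)^(2*s) * ((k+q).choose k)
        ≤ (3*(r+1))^s * s.factorial * j^s * ((2*(r+1))^s * s.factorial * d^s * ((k+q+2*s).choose (k+s))) := by
      calc (j+d)^(2*s) * ((k+q).choose k) = (j+d)^s * ((j+d)^s * ((k+q).choose k)) := by ring
        _ ≤ (j+d)^s * ((3*(r+1))^s * s.factorial * j^s * ((k+q+s).choose (k+s))) :=
            Nat.mul_le_mul_left _ t1
        _ = (3*(r+1))^s * s.factorial * j^s * ((j+d)^s * ((k+q+s).choose (k+s))) := by ring
        _ ≤ (3*(r+1))^s * s.factorial * j^s * ((2*(r+1))^s * s.factorial * d^s * ((k+q+2*s).choose (k+s))) :=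
            Nat.mul_le_mul_left _ t2
    have h2 := (Nat.cast_le (α := ℝ)).2 comb
    push_cast at h2
    rw [hKA, hKB]; push_cast
    linarith [h2]
  have hxnj : (x / ((j:ℝ)/n)) = x * n / (j:ℝ) := by field_simp
  have hynd : ((1-x) / ((d:ℝ)/n)) = (1-x) * n / (d:ℝ) := by field_simp
  have hA' : A * (j:ℝ)^s = x^s * n^s := by
    rw [hA, hxnj, ← mul_pow, div_mul_cancel₀ _ hj0.ne', mul_pow]
  have hB' : B * (d:ℝ)^s = (1-x)^s * n^s := by
    rw [hB, hynd, ← mul_pow, div_mul_cancel₀ _ hd0.ne', mul_pow]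
  have E1 : A * Pb (k+q) k x ≤ KA * Pb (k+q+s) (k+s) x := by
    apply le_of_mul_le_mul_right _ (pow_pos hj0 s)
    calc A * Pb (k+q) k x * (j:ℝ)^s = (x^s * n^s) * Pb (k+q) k x := by rw [← hA']; ring
      _ = (((j:ℝ)+d)^s * ((k+q).choose k : ℝ)) * (x^(k+s) * (1-x)^q) := by
          unfold Pb; rw [Nat.add_sub_cancel_left, hnr]; ring
      _ ≤ (KA * (j:ℝ)^s * ((k+q+s).choose (k+s) : ℝ)) * (x^(k+s) * (1-x)^q) :=
          mul_le_mul_of_nonneg_right cast1 (by positivity)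
      _ = KA * Pb (k+q+s) (k+s) x * (j:ℝ)^s := by
          unfold Pb; rw [show k+q+s-(k+s) = q from by omega]; ring
  have E2 : B * Pb (k+q) k x ≤ KB * Pb (k+q+s) k x := by
    apply le_of_mul_le_mul_right _ (pow_pos hd0 s)
    calc B * Pb (k+q) k x * (d:ℝ)^s = ((1-x)^s * n^s) * Pb (k+q) k x := by rw [← hB']; ring
      _ = (((j:ℝ)+d)^s * ((k+q).choose k : ℝ)) * (x^k * (1-x)^(q+s)) := by
          unfold Pb; rw [Nat.add_sub_cancel_left, hnr]; ring
      _ ≤ (KB * (d:ℝ)^s * ((k+q+s).choose k : ℝ)) * (x^k * (1-x)^(q+s)) :=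
          mul_le_mul_of_nonneg_right cast2 (by positivity)
      _ = KB * Pb (k+q+s) k x * (d:ℝ)^s := by
          unfold Pb; rw [show k+q+s-k = q+s from by omega]; ring
  have E3 : A * (B * Pb (k+q) k x) ≤ KA * KB * Pb (k+q+2*s) (k+s) x := by
    apply le_of_mul_le_mul_right _ (mul_pos (pow_pos hj0 s) (pow_pos hd0 s))
    calc A * (B * Pb (k+q) k x) * ((j:ℝ)^s * (d:ℝ)^s)
        = (A * (j:ℝ)^s) * (B * (d:ℝ)^s) * Pb (k+q) k x := by ring
      _ = (((j:ℝ)+d)^(2*s) * ((k+q).choose k : ℝ)) * (x^(k+s) * (1-x)^(q+s)) := by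
          rw [hA', hB']; unfold Pb; rw [Nat.add_sub_cancel_left, hnr]; ring
      _ ≤ (KA * KB * (j:ℝ)^s * (d:ℝ)^s * ((k+q+2*s).choose (k+s) : ℝ)) * (x^(k+s) * (1-x)^(q+s)) :=
          mul_le_mul_of_nonneg_right cast3 (by positivity)
      _ = KA * KB * Pb (k+q+2*s) (k+s) x * ((j:ℝ)^s * (d:ℝ)^s) := by
          unfold Pb; rw [show k+q+2*s-(k+s) = q+s from by omega]; ring
  have := add_le_add (add_le_add (add_le_add (le_refl (Pb (k+q) k x)) E1) E2) E3
  linarith [this]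

private lemma core2 (α β β₀ β₁ u v : ℝ) (hu : 0 < u) (hv : 0 < v) (r : ℕ)
    (hue : u = α + β₀*(r:ℝ)) (hve : v = β + β₁*(r:ℝ))
    (s k m j n : ℕ) (hus : u ≤ (s:ℝ)) (hvs : v ≤ (s:ℝ))
    (hkm : k ≤ m) (hj1 : 1 ≤ j) (hjn : j + 1 ≤ n)
    (hj3 : k + 1 ≤ 3*j) (hd2 : (m-k) + 1 ≤ 2*(n-j))
    (hn : n ≤ (r+1)*m)
    {x : ℝ} (hx0 : 0 < x) (hx1 : x < 1) :
    (((j:ℝ)/n)^α * (1-(j:ℝ)/n)^β * (((j:ℝ)/n)^β₀ * (1-(j:ℝ)/n)^β₁)^r)⁻¹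
        * ((m.choose k : ℝ)) * x^k * (1-x)^(m-k)
      ≤ (x^u*(1-x)^v)⁻¹ * (Pb m k x
          + (3*((r:ℝ)+1))^s * s.factorial * Pb (m+s) (k+s) x
          + (2*((r:ℝ)+1))^s * s.factorial * Pb (m+s) k x
          + ((3*((r:ℝ)+1))^s * s.factorial) * ((2*((r:ℝ)+1))^s * s.factorial) * Pb (m+2*s) (k+s) x) := by
  set q : ℕ := m - k with hq_def
  set d : ℕ := n - j with hd_def
  have hmkq : m = k + q := by omega
  have hnjd : n = j + d := by omega
  have hnR : (0:ℝ) < n := by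
    have : 0 < n := by omega
    exact_mod_cast this
  have hjR : (0:ℝ) < j := by exact_mod_cast hj1
  have ha0 : 0 < (j:ℝ)/n := by positivity
  have ha1 : (j:ℝ)/n < 1 := by
    rw [div_lt_one hnR]
    exact_mod_cast by omega
  rw [weight_eq α β β₀ β₁ r ha0 ha1, ← hue, ← hve]
  have hcastn : ((j:ℝ) + (d:ℝ)) = (n:ℝ) := by exact_mod_cast (congrArg (Nat.cast : ℕ → ℝ) hnjd).symm
  have h1a : 1 - (j:ℝ)/n = (d:ℝ)/((j:ℝ)+(d:ℝ)) := by
    rw [hcastn]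
    field_simp
    linarith
  have h2a : (j:ℝ)/n = (j:ℝ)/((j:ℝ)+(d:ℝ)) := by rw [hcastn]
  have hshape : (((j:ℝ)/n)^u * (1-(j:ℝ)/n)^v)⁻¹ * ((m.choose k : ℝ)) * x^k * (1-x)^(m-k)
      = (((j:ℝ)/((j:ℝ)+(d:ℝ)))^u * ((d:ℝ)/((j:ℝ)+(d:ℝ)))^v)⁻¹ * Pb m k x := by
    rw [← h1a, ← h2a]
    unfold Pb
    ring
  rw [hshape, hmkq]
  have hd1 : 1 ≤ d := by omega
  have hj3' : k + 1 ≤ 3*j := hj3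
  have hd2' : q + 1 ≤ 2*d := by omega
  have hn' : j + d ≤ (r+1)*(k+q) := by rw [← hmkq, ← hnjd]; exact hn
  exact core u v hu hv s k q j d r hus hvs hj1 hd1 hj3' hd2' hn' hx0 hx1
theorem weighted_bernstein_sum_kstar_bound (α β β₀ β₁ : ℝ) (hα : 0 < α) (hβ : 0 < β)
    (h0 : 1/2 ≤ β₀) (h1 : 1/2 ≤ β₁) (r : ℕ) (hr : 1 ≤ r) :
    ∃ C > 0, ∀ n : ℕ, 2 ≤ n → ∀ x ∈ Set.Ioo (0:ℝ) 1,
      ∑ k ∈ Finset.range (n-r+1),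
        (let ks : ℕ := if k = 0 then 1 else if k = n - r then n - r - 1 else k;
          (((ks:ℝ)/n)^α * (1-(ks:ℝ)/n)^β * (((ks:ℝ)/n)^β₀ * (1-(ks:ℝ)/n)^β₁)^r)⁻¹
            * ((n-r).choose k : ℝ) * x^k * (1-x)^(n-r-k))
      ≤ C * (x^α*(1-x)^β * (x^β₀*(1-x)^β₁)^r)⁻¹ := by
  set u : ℝ := α + β₀*(r:ℝ) with hu_def
  set v : ℝ := β + β₁*(r:ℝ) with hv_def
  have hrr : (0:ℝ) ≤ r := Nat.cast_nonneg r
  have hr0 : (0:ℝ) < r := by exact_mod_cast hr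
  have hu : 0 < u := by rw [hu_def]; nlinarith
  have hv : 0 < v := by rw [hv_def]; nlinarith
  set s : ℕ := max 1 (max ⌈u⌉₊ ⌈v⌉₊) with hs_def
  have hus : u ≤ (s:ℝ) := by
    refine (Nat.le_ceil u).trans ?_
    exact_mod_cast Nat.cast_le.2 (le_trans (le_max_left ⌈u⌉₊ ⌈v⌉₊) (le_max_right 1 _))
  have hvs : v ≤ (s:ℝ) := by
    refine (Nat.le_ceil v).trans ?_
    exact_mod_cast Nat.cast_le.2 (le_trans (le_max_right ⌈u⌉₊ ⌈v⌉₊) (le_max_right 1 _))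
  set KA : ℝ := (3*((r:ℝ)+1))^s * (s.factorial : ℝ) with hKA_def
  set KB : ℝ := (2*((r:ℝ)+1))^s * (s.factorial : ℝ) with hKB_def
  have hsf : (0:ℝ) < (s.factorial : ℝ) := by exact_mod_cast s.factorial_pos
  have hKA0 : 0 < KA := by rw [hKA_def]; positivity
  have hKB0 : 0 < KB := by rw [hKB_def]; positivity
  have hEdge0 : 0 < (r:ℝ)^u * 2^v :=
    mul_pos (Real.rpow_pos_of_pos hr0 u) (Real.rpow_pos_of_pos two_pos v)
  refine ⟨1 + KA + KB + KA*KB + (r:ℝ)^u * 2^v, by nlinarith, ?_⟩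
  intro n hn2 x hx
  obtain ⟨hx0, hx1⟩ := hx
  have hx1' : (0:ℝ) < 1 - x := by linarith
  rw [weight_eq α β β₀ β₁ r hx0 hx1, ← hu_def, ← hv_def]
  have hxw1 : x^u * (1-x)^v ≤ 1 := by
    have a1 : x^u ≤ 1 := Real.rpow_le_one hx0.le hx1.le hu.le
    have a2 : (1-x)^v ≤ 1 := Real.rpow_le_one hx1'.le (by linarith) hv.le
    have a3 : 0 ≤ x^u := (Real.rpow_pos_of_pos hx0 u).le
    nlinarith
  have hxwpos : 0 < x^u * (1-x)^v :=
    mul_pos (Real.rpow_pos_of_pos hx0 u) (Real.rpow_pos_of_pos hx1' v)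
  have hinv1 : 1 ≤ (x^u * (1-x)^v)⁻¹ := (one_le_inv_iff₀.2 ⟨hxwpos, hxw1⟩ : _)
  have hnR : (0:ℝ) < n := by exact_mod_cast (by omega : 0 < n)
  set m : ℕ := n - r with hm_def
  by_cases hm0 : m = 0
  · -- small n : n ≤ r, single term
    rw [hm0]
    rw [Finset.sum_range_one]
    simp only [reduceIte, Nat.cast_one, Nat.choose_zero_right, pow_zero, mul_one,
      Nat.sub_self, Nat.cast_one]
    have hnr : n ≤ r := by omega
    have hinv : (0:ℝ) < 1/n := by positivity
    have hlt1 : (1:ℝ)/n < 1 := by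
      rw [div_lt_one hnR]
      exact_mod_cast by omega
    rw [weight_eq α β β₀ β₁ r hinv hlt1, ← hu_def, ← hv_def]
    have hn2R : (2:ℝ) ≤ n := by exact_mod_cast hn2
    have hnrR : (n:ℝ) ≤ r := by exact_mod_cast hnr
    have b1 : ((1:ℝ)/r)^u ≤ ((1:ℝ)/n)^u :=
      Real.rpow_le_rpow (by positivity) (one_div_le_one_div_of_le hnR hnrR) hu.le
    have b2 : ((1:ℝ)/2)^v ≤ ((1:ℝ)-1/n)^v := by
      apply Real.rpow_le_rpow (by norm_num)
      · have := one_div_le_one_div_of_le two_pos hn2R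
        linarith
      · exact hv.le
    have prodpos : 0 < ((1:ℝ)/r)^u * ((1:ℝ)/2)^v := by
      exact mul_pos (Real.rpow_pos_of_pos (by positivity) u) (Real.rpow_pos_of_pos (by norm_num) v)
    have wge : ((1:ℝ)/r)^u * ((1:ℝ)/2)^v ≤ ((1:ℝ)/n)^u * ((1:ℝ)-1/n)^v := by
      apply mul_le_mul b1 b2 (Real.rpow_pos_of_pos (by norm_num) v).le
        (Real.rpow_pos_of_pos (by positivity) u).le
    have winv : (((1:ℝ)/n)^u * ((1:ℝ)-1/n)^v)⁻¹ ≤ (((1:ℝ)/r)^u * ((1:ℝ)/2)^v)⁻¹ :=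
      inv_anti₀ prodpos wge
    have hconv : (((1:ℝ)/r)^u * ((1:ℝ)/2)^v)⁻¹ = (r:ℝ)^u * 2^v := by
      rw [one_div, one_div, Real.inv_rpow hrr, Real.inv_rpow (by norm_num : (0:ℝ) ≤ 2)]
      rw [mul_inv, inv_inv, inv_inv]
    calc (((1:ℝ)/n)^u * ((1:ℝ)-1/n)^v)⁻¹ ≤ (r:ℝ)^u * 2^v := hconv ▸ winv
      _ = ((r:ℝ)^u * 2^v) * 1 := by ring
      _ ≤ (1 + KA + KB + KA*KB + (r:ℝ)^u * 2^v) * (x^u*(1-x)^v)⁻¹ :=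
          mul_le_mul (by nlinarith) hinv1 zero_le_one (by nlinarith)
  · have hm1 : 1 ≤ m := by omega
    have hnm : n = m + r := by omega
    have hnle : n ≤ (r+1)*m := by
      have h1 : r ≤ r*m := Nat.le_mul_of_pos_right r (by omega)
      have h2 : (r+1)*m = r*m + m := by ring
      omega
    set G : ℕ → ℝ := fun k => (x^u*(1-x)^v)⁻¹ * (Pb m k x
          + KA * Pb (m+s) (k+s) x
          + KB * Pb (m+s) k x
          + KA * KB * Pb (m+2*s) (k+s) x) with hG_def
    have hper : ∀ k ∈ Finset.range (m+1),
        (let ks : ℕ := if k = 0 then 1 else if k = m then m - 1 else k;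
          (((ks:ℝ)/n)^α * (1-(ks:ℝ)/n)^β * (((ks:ℝ)/n)^β₀ * (1-(ks:ℝ)/n)^β₁)^r)⁻¹
            * (m.choose k : ℝ) * x^k * (1-x)^(m-k)) ≤ G k := by
      intro k hk
      rw [Finset.mem_range] at hk
      have hkm : k ≤ m := by omega
      dsimp only
      by_cases hk0 : k = 0
      · subst hk0
        rw [if_pos rfl]
        simp only [hG_def]
        exact core2 α β β₀ β₁ u v hu hv r hu_def hv_def s 0 m 1 n hus hvs
          (by omega) le_rfl (by omega) (by omega) (by omega) hnle hx0 hx1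
      · by_cases hkm' : k = m
        · rw [if_neg hk0, if_pos hkm']
          by_cases hm1' : m = 1
          · -- zero term
            rw [show m - 1 = 0 from by omega]
            have hz : ((0:ℕ):ℝ)/n = 0 := by simp
            rw [hz]
            rw [Real.zero_rpow hα.ne', Real.zero_rpow (by positivity : β₀ ≠ 0)]
            simp only [zero_mul, inv_zero]
            simp only [hG_def]
            have g1 : 0 ≤ Pb m k x := Pb_nonneg _ _ hx0.le hx1.le
            have g2 : 0 ≤ Pb (m+s) (k+s) x := Pb_nonneg _ _ hx0.le hx1.le
            have g3 : 0 ≤ Pb (m+s) k x := Pb_nonneg _ _ hx0.le hx1.le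
            have g4 : 0 ≤ Pb (m+2*s) (k+s) x := Pb_nonneg _ _ hx0.le hx1.le
            have hKAB : 0 ≤ KA * KB := by positivity
            have : (0:ℝ) ≤ (x^u*(1-x)^v)⁻¹ := by positivity
            nlinarith [mul_nonneg hKA0.le g2, mul_nonneg hKB0.le g3, mul_nonneg hKAB g4]
          · have hm2 : 2 ≤ m := by omega
            simp only [hG_def]
            exact core2 α β β₀ β₁ u v hu hv r hu_def hv_def s k m (m-1) n hus hvs
              hkm (by omega) (by omega) (by omega) (by omega) hnle hx0 hx1
        · rw [if_neg hk0, if_neg hkm']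
          simp only [hG_def]
          exact core2 α β β₀ β₁ u v hu hv r hu_def hv_def s k m k n hus hvs
            hkm (by omega) (by omega) (by omega) (by omega) hnle hx0 hx1
    calc ∑ k ∈ Finset.range (m+1),
        (let ks : ℕ := if k = 0 then 1 else if k = m then m - 1 else k;
          (((ks:ℝ)/n)^α * (1-(ks:ℝ)/n)^β * (((ks:ℝ)/n)^β₀ * (1-(ks:ℝ)/n)^β₁)^r)⁻¹
            * (m.choose k : ℝ) * x^k * (1-x)^(m-k))
        ≤ ∑ k ∈ Finset.range (m+1), G k := Finset.sum_le_sum hper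
      _ = (x^u*(1-x)^v)⁻¹ * ((∑ k ∈ Finset.range (m+1), Pb m k x)
            + KA * (∑ k ∈ Finset.range (m+1), Pb (m+s) (k+s) x)
            + KB * (∑ k ∈ Finset.range (m+1), Pb (m+s) k x)
            + KA * KB * (∑ k ∈ Finset.range (m+1), Pb (m+2*s) (k+s) x)) := by
          rw [hG_def, ← Finset.mul_sum]
          congr 1
          rw [Finset.sum_add_distrib, Finset.sum_add_distrib, Finset.sum_add_distrib,
            ← Finset.mul_sum, ← Finset.mul_sum, ← Finset.mul_sum]
      _ ≤ (x^u*(1-x)^v)⁻¹ * (1 + KA * 1 + KB * 1 + KA * KB * 1) := by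
          apply mul_le_mul_of_nonneg_left _ (by positivity)
          have e1 : ∑ k ∈ Finset.range (m+1), Pb m k x = 1 := sum_Pb2 m x
          have e2 : ∑ k ∈ Finset.range (m+1), Pb (m+s) (k+s) x ≤ 1 :=
            sum_Pb_shift_le m s (m+s) le_rfl hx0.le hx1.le
          have e3 : ∑ k ∈ Finset.range (m+1), Pb (m+s) k x ≤ 1 :=
            sum_Pb_le m (m+s) (by omega) hx0.le hx1.le
          have e4 : ∑ k ∈ Finset.range (m+1), Pb (m+2*s) (k+s) x ≤ 1 :=
            sum_Pb_shift_le m s (m+2*s) (by omega) hx0.le hx1.le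
          have hKAB : (0:ℝ) ≤ KA * KB := by positivity
          rw [e1]
          gcongr
      _ ≤ (1 + KA + KB + KA*KB + (r:ℝ)^u * 2^v) * (x^u*(1-x)^v)⁻¹ := by
          rw [mul_comm]
          apply mul_le_mul_of_nonneg_right _ (by positivity)
          nlinarith
end

section
/- Let w(x) = x^α (1-x)^β with α, β > 0. There exists C > 0 such that for every n ≥ 1 and every x ∈ (0,1), w(x) · ( Σ_{k=0}^n w^{-2}(k*/n) p_{n,k}(x) )^{1/2} ≤ C, where k* = max(1, min(k, n−1)) replaces the endpoint indices k = 0 and k = n. -/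
open Finset Real

lemma choose_shift (n k : ℕ) : ∀ m : ℕ,
    (n+m).choose (k+m) * ∏ i ∈ range m, (k+1+i) = n.choose k * ∏ i ∈ range m, (n+1+i) := by
  intro m
  induction m with
  | zero => simp
  | succ m ih =>
    rw [prod_range_succ, prod_range_succ, ← mul_assoc, ← mul_assoc]
    have h : (n+(m+1)).choose (k+(m+1)) * (k+1+m) = (n+m).choose (k+m) * (n+1+m) := by
      have h1 := Nat.add_one_mul_choose_eq (n+m) (k+m)
      have e1 : n+(m+1) = (n+m).succ := by omega
      have e2 : k+(m+1) = (k+m).succ := by omega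
      have e3 : k+1+m = (k+m).succ := by omega
      have e4 : n+1+m = (n+m).succ := by omega
      rw [e1, e2, e3, e4, mul_comm ((n+m).choose (k+m)), ← h1, mul_comm]
    calc ((n+(m+1)).choose (k+(m+1)) * ∏ x ∈ range m, (k+1+x)) * (k+1+m)
        = ((n+(m+1)).choose (k+(m+1)) * (k+1+m)) * ∏ x ∈ range m, (k+1+x) := by ring
      _ = ((n+m).choose (k+m) * (n+1+m)) * ∏ x ∈ range m, (k+1+x) := by rw [h]
      _ = ((n+m).choose (k+m) * ∏ x ∈ range m, (k+1+x)) * (n+1+m) := by ring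
      _ = (n.choose k * ∏ x ∈ range m, (n+1+x)) * (n+1+m) := by rw [ih]

lemma choose_moment_bound (n k m : ℕ) :
    n.choose k * n^m ≤ (n+m).choose (k+m) * ((m+1) * max 1 k)^m := by
  have h1 : n.choose k * n^m ≤ n.choose k * ∏ i ∈ range m, (n+1+i) := by
    apply Nat.mul_le_mul_left
    calc n^m = ∏ _i ∈ range m, n := by rw [prod_const, card_range]
      _ ≤ ∏ i ∈ range m, (n+1+i) := prod_le_prod' (fun i _ => by omega)
  have h2 : ∏ i ∈ range m, (k+1+i) ≤ ((m+1) * max 1 k)^m := by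
    calc ∏ i ∈ range m, (k+1+i) ≤ ∏ _i ∈ range m, ((m+1) * max 1 k) := by
          apply prod_le_prod' (fun i hi => ?_)
          simp only [mem_range] at hi
          rcases Nat.eq_zero_or_pos k with hk | hk
          · subst hk; simp; omega
          · have : max 1 k = k := by omega
            rw [this]; nlinarith
      _ = ((m+1) * max 1 k)^m := by rw [prod_const, card_range]
  calc n.choose k * n^m ≤ n.choose k * ∏ i ∈ range m, (n+1+i) := h1
    _ = (n+m).choose (k+m) * ∏ i ∈ range m, (k+1+i) := (choose_shift n k m).symm
    _ ≤ (n+m).choose (k+m) * ((m+1) * max 1 k)^m := Nat.mul_le_mul_left _ h2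

lemma binom_sum_one (N : ℕ) (x : ℝ) :
    ∑ j ∈ range (N+1), (N.choose j : ℝ) * x^j * (1-x)^(N-j) = 1 := by
  have h := add_pow x (1-x) N
  simp only [add_sub_cancel] at h
  rw [one_pow] at h
  conv_rhs => rw [h]
  apply Finset.sum_congr rfl
  intro j _; ring

lemma momentA (m n : ℕ) (x : ℝ) (hx : x ∈ Set.Ioo (0:ℝ) 1) :
    ∑ k ∈ range (n+1), (n.choose k : ℝ) * x^k * (1-x)^(n-k) * ((n*x)/(max 1 k))^m
      ≤ ((m:ℝ)+1)^m := by
  obtain ⟨hx0, hx1⟩ := hx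
  have h1x : (0:ℝ) < 1 - x := by linarith
  set g : ℕ → ℝ := fun j => ((n+m).choose j : ℝ) * x^j * (1-x)^((n+m)-j) with hg
  have hgnn : ∀ j, 0 ≤ g j := fun j => by
    apply mul_nonneg (mul_nonneg (Nat.cast_nonneg _) (by positivity)) (by positivity)
  have hterm : ∀ k ∈ range (n+1),
      (n.choose k : ℝ) * x^k * (1-x)^(n-k) * ((n*x)/(max 1 k))^m
        ≤ ((m:ℝ)+1)^m * g (k+m) := by
    intro k _
    have hM : (0:ℝ) < (max 1 k : ℕ) := by positivity
    have hcb : ((n.choose k : ℝ)) * (n:ℝ)^m ≤ ((n+m).choose (k+m) : ℝ) * (((m:ℝ)+1) * (max 1 k : ℕ))^m := by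
      have := choose_moment_bound n k m
      have := (Nat.cast_le (α := ℝ)).mpr this
      push_cast at this
      convert this using 2
      · rfl
      · simp
    have key : (n.choose k : ℝ) * x^k * (1-x)^(n-k) * ((n*x)/(max 1 k))^m
        = ((n.choose k : ℝ) * (n:ℝ)^m) * (x^(k+m) * (1-x)^(n-k) / ((max 1 k : ℕ):ℝ)^m) := by
      rw [div_pow, mul_pow, pow_add]
      field_simp
    rw [key]
    have key2 : ((m:ℝ)+1)^m * g (k+m)
        = (((n+m).choose (k+m) : ℝ) * (((m:ℝ)+1) * (max 1 k : ℕ))^m) * (x^(k+m) * (1-x)^(n-k) / ((max 1 k : ℕ):ℝ)^m) := by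
      have e : (n+m)-(k+m) = n-k := by omega
      rw [hg]; simp only [e]
      rw [mul_pow]
      field_simp
    rw [key2]
    apply mul_le_mul_of_nonneg_right hcb
    positivity
  calc ∑ k ∈ range (n+1), (n.choose k : ℝ) * x^k * (1-x)^(n-k) * ((n*x)/(max 1 k))^m
      ≤ ∑ k ∈ range (n+1), ((m:ℝ)+1)^m * g (k+m) := Finset.sum_le_sum hterm
    _ = ((m:ℝ)+1)^m * ∑ k ∈ range (n+1), g (k+m) := by rw [mul_sum]
    _ ≤ ((m:ℝ)+1)^m * 1 := by
        apply mul_le_mul_of_nonneg_left _ (by positivity)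
        have hshift : ∑ k ∈ range (n+1), g (k+m) = ∑ j ∈ Ico m (n+1+m), g j := by
          rw [Finset.sum_Ico_eq_sum_range]
          simp only [Nat.add_sub_cancel]
          exact Finset.sum_congr rfl (fun i _ => by rw [add_comm])
        rw [hshift]
        calc ∑ j ∈ Ico m (n+1+m), g j ≤ ∑ j ∈ range (n+m+1), g j := by
              apply Finset.sum_le_sum_of_subset_of_nonneg
              · intro j hj; simp only [mem_Ico] at hj; simp only [mem_range]; omega
              · intro j _ _; exact hgnn j
          _ = 1 := binom_sum_one (n+m) x
    _ = ((m:ℝ)+1)^m := mul_one _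

lemma momentB (m n : ℕ) (x : ℝ) (hx : x ∈ Set.Ioo (0:ℝ) 1) :
    ∑ k ∈ range (n+1), (n.choose k : ℝ) * x^k * (1-x)^(n-k) * ((n*(1-x))/(max 1 (n-k)))^m
      ≤ ((m:ℝ)+1)^m := by
  have hy : (1-x) ∈ Set.Ioo (0:ℝ) 1 := ⟨by linarith [hx.2], by linarith [hx.1]⟩
  have h := momentA m n (1-x) hy
  set f : ℕ → ℝ := fun k => (n.choose k : ℝ) * (1-x)^k * (1-(1-x))^(n-k) * ((n*(1-x))/(max 1 k))^m with hf
  have hrefl : ∑ j ∈ range (n+1), f (n - j) = ∑ j ∈ range (n+1), f j := by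
    have := Finset.sum_range_reflect f (n+1)
    simpa using this
  calc ∑ k ∈ range (n+1), (n.choose k : ℝ) * x^k * (1-x)^(n-k) * ((n*(1-x))/(max 1 (n-k)))^m
      = ∑ k ∈ range (n+1), f (n - k) := by
        apply Finset.sum_congr rfl
        intro k hk
        simp only [mem_range] at hk
        have hkn : k ≤ n := by omega
        rw [hf]
        simp only
        rw [Nat.choose_symm hkn, show n - (n - k) = k by omega, show (1:ℝ)-(1-x) = x by ring]
        ring
    _ = ∑ k ∈ range (n+1), f k := hrefl
    _ ≤ ((m:ℝ)+1)^m := h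

lemma rpow_le_one_add_pow_s19 (t : ℝ) (ht : 0 ≤ t) (γ : ℝ) (hγ : 0 ≤ γ) (m : ℕ) (hm : γ ≤ m) :
    t^γ ≤ 1 + t^m := by
  rcases le_total t 1 with h | h
  · have h1 : t^γ ≤ 1 := Real.rpow_le_one ht h hγ
    nlinarith [pow_nonneg ht m]
  · have h1 : t^γ ≤ t^(m:ℝ) := Real.rpow_le_rpow_of_exponent_le h hm
    rw [Real.rpow_natCast] at h1
    nlinarith

lemma term_bound (α β : ℝ) (hα : 0 < α) (hβ : 0 < β) (m₁ m₂ : ℕ)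
    (hm₁ : 2*α ≤ m₁) (hm₂ : 2*β ≤ m₂) (n k : ℕ) (hn : 2 ≤ n) (hk : k ≤ n)
    (x : ℝ) (hx : x ∈ Set.Ioo (0:ℝ) 1) :
    (x^α*(1-x)^β)^2 * (((((max 1 (min k (n-1)):ℕ):ℝ)/n)^α * (1-((max 1 (min k (n-1)):ℕ):ℝ)/n)^β)⁻¹)^2
      ≤ 2 + 2^m₁*((n*x)/(max 1 k))^m₁ + 2^m₂*((n*(1-x))/(max 1 (n-k)))^m₂ := by
  obtain ⟨hx0, hx1⟩ := hx
  have hx1' : (0:ℝ) < 1 - x := by linarith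
  set ks : ℕ := max 1 (min k (n-1)) with hks
  have hks1 : 1 ≤ ks := le_max_left _ _
  have hksn : ks ≤ n - 1 := by omega
  have hmk : max 1 k ≤ 2 * ks := by omega
  have hmnk : max 1 (n - k) ≤ 2 * (n - ks) := by omega
  have hn0 : (0:ℝ) < n := by positivity
  set r : ℝ := (ks:ℝ)/n with hr
  have hr0 : 0 < r := by
    apply div_pos _ hn0
    exact_mod_cast hks1
  have hr1 : r < 1 := by
    rw [hr, div_lt_one hn0]
    exact_mod_cast (by omega : ks < n)
  have h1r : (0:ℝ) < 1 - r := by linarith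
  have h1re : 1 - r = ((n - ks : ℕ):ℝ)/n := by
    rw [hr]
    have : ((n - ks : ℕ):ℝ) = (n:ℝ) - ks := by
      push_cast [Nat.cast_sub (by omega : ks ≤ n)]; ring
    rw [this]
    field_simp
  set A : ℝ := (x/r)^α with hA
  set B : ℝ := ((1-x)/(1-r))^β with hB
  have hA0 : 0 ≤ A := Real.rpow_nonneg (by positivity) _
  have hB0 : 0 ≤ B := Real.rpow_nonneg (by positivity) _
  -- Step 1 : LHS = (A*B)^2
  have step1 : (x^α*(1-x)^β)^2 * ((r^α * (1-r)^β)⁻¹)^2 = (A*B)^2 := by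
    have e : (x^α*(1-x)^β) * (r^α * (1-r)^β)⁻¹ = A * B := by
      rw [hA, hB, Real.div_rpow hx0.le hr0.le, Real.div_rpow hx1'.le h1r.le]
      have h1 : r^α ≠ 0 := ne_of_gt (Real.rpow_pos_of_pos hr0 _)
      have h2 : (1-r)^β ≠ 0 := ne_of_gt (Real.rpow_pos_of_pos h1r _)
      field_simp
    rw [← mul_pow, e]
  rw [step1]
  -- Step 2 : (A*B)^2 ≤ A^2 + B^2
  have step2 : (A*B)^2 ≤ A^2 + B^2 := by
    rcases le_total x r with h | h
    · have hA1 : A ≤ 1 := Real.rpow_le_one (by positivity) (by rw [div_le_one hr0]; exact h) hα.le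
      have hA2 : A^2 ≤ 1 := pow_le_one₀ hA0 hA1
      calc (A*B)^2 = A^2*B^2 := by ring
        _ ≤ 1 * B^2 := mul_le_mul_of_nonneg_right hA2 (sq_nonneg B)
        _ ≤ A^2 + B^2 := by linarith [sq_nonneg A]
    · have hB1 : B ≤ 1 := Real.rpow_le_one (by positivity)
        (by rw [div_le_one h1r]; linarith) hβ.le
      have hB2 : B^2 ≤ 1 := pow_le_one₀ hB0 hB1
      calc (A*B)^2 = A^2*B^2 := by ring
        _ ≤ A^2 * 1 := mul_le_mul_of_nonneg_left hB2 (sq_nonneg A)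
        _ ≤ A^2 + B^2 := by linarith [sq_nonneg B]
  -- Step 3 : A^2 ≤ 1 + 2^m₁ * (n*x/(max 1 k))^m₁
  have hxr : x / r = (n*x)/(ks:ℝ) := by
    rw [hr]
    field_simp
  have hratio1 : (n*x)/(ks:ℝ) ≤ 2 * ((n*x)/((max 1 k : ℕ):ℝ)) := by
    have hks0 : (0:ℝ) < (ks:ℝ) := by exact_mod_cast hks1
    have hmax0 : (0:ℝ) < ((max 1 k : ℕ):ℝ) := by
      have : 1 ≤ max 1 k := le_max_left _ _
      exact_mod_cast this
    have h2 : ((max 1 k : ℕ):ℝ) ≤ 2 * (ks:ℝ) := by exact_mod_cast hmk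
    have hnx : 0 ≤ n*x := by positivity
    rw [← mul_div_assoc, div_le_div_iff₀ hks0 hmax0]
    calc (n:ℝ)*x * ((max 1 k : ℕ):ℝ) ≤ (n:ℝ)*x * (2 * (ks:ℝ)) :=
          mul_le_mul_of_nonneg_left h2 hnx
      _ = 2*((n:ℝ)*x) * (ks:ℝ) := by ring
  have step3 : A^2 ≤ 1 + 2^m₁ * ((n*x)/((max 1 k:ℕ):ℝ))^m₁ := by
    have hA2 : A^2 = (x/r)^(2*α) := by
      rw [hA, ← Real.rpow_natCast ((x/r)^α) 2, ← Real.rpow_mul (by positivity)]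
      norm_num [mul_comm]
    rw [hA2]
    calc (x/r)^(2*α) ≤ 1 + (x/r)^m₁ :=
          rpow_le_one_add_pow_s19 _ (by positivity) _ (by positivity) _ hm₁
      _ ≤ 1 + 2^m₁ * ((n*x)/((max 1 k:ℕ):ℝ))^m₁ := by
          have : (x/r)^m₁ ≤ (2 * ((n*x)/((max 1 k:ℕ):ℝ)))^m₁ := by
            apply pow_le_pow_left₀ (by positivity)
            rw [hxr]; exact hratio1
          rw [mul_pow] at this
          linarith
  -- Step 4 : B^2 ≤ 1 + 2^m₂ * (n*(1-x)/(max 1 (n-k)))^m₂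
  have hxr2 : (1-x) / (1-r) = (n*(1-x))/((n-ks:ℕ):ℝ) := by
    rw [h1re]
    have hnks0 : (0:ℝ) < ((n-ks:ℕ):ℝ) := by exact_mod_cast (by omega : 0 < n - ks)
    field_simp
  have hratio2 : (n*(1-x))/((n-ks:ℕ):ℝ) ≤ 2 * ((n*(1-x))/((max 1 (n-k) : ℕ):ℝ)) := by
    have hks0 : (0:ℝ) < ((n-ks:ℕ):ℝ) := by exact_mod_cast (by omega : 0 < n - ks)
    have hmax0 : (0:ℝ) < ((max 1 (n-k) : ℕ):ℝ) := by
      have : 1 ≤ max 1 (n-k) := le_max_left _ _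
      exact_mod_cast this
    have h2 : ((max 1 (n-k) : ℕ):ℝ) ≤ 2 * ((n-ks:ℕ):ℝ) := by exact_mod_cast hmnk
    have hnx : 0 ≤ n*(1-x) := by positivity
    rw [← mul_div_assoc, div_le_div_iff₀ hks0 hmax0]
    calc (n:ℝ)*(1-x) * ((max 1 (n-k) : ℕ):ℝ) ≤ (n:ℝ)*(1-x) * (2 * ((n-ks:ℕ):ℝ)) :=
          mul_le_mul_of_nonneg_left h2 hnx
      _ = 2*((n:ℝ)*(1-x)) * ((n-ks:ℕ):ℝ) := by ring
  have step4 : B^2 ≤ 1 + 2^m₂ * ((n*(1-x))/((max 1 (n-k):ℕ):ℝ))^m₂ := by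
    have hB2 : B^2 = ((1-x)/(1-r))^(2*β) := by
      rw [hB, ← Real.rpow_natCast (((1-x)/(1-r))^β) 2, ← Real.rpow_mul (by positivity)]
      norm_num [mul_comm]
    rw [hB2]
    calc ((1-x)/(1-r))^(2*β) ≤ 1 + ((1-x)/(1-r))^m₂ :=
          rpow_le_one_add_pow_s19 _ (by positivity) _ (by positivity) _ hm₂
      _ ≤ 1 + 2^m₂ * ((n*(1-x))/((max 1 (n-k):ℕ):ℝ))^m₂ := by
          have : ((1-x)/(1-r))^m₂ ≤ (2 * ((n*(1-x))/((max 1 (n-k):ℕ):ℝ)))^m₂ := by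
            apply pow_le_pow_left₀ (by positivity)
            rw [hxr2]; exact hratio2
          rw [mul_pow] at this
          linarith
  calc (A*B)^2 ≤ A^2 + B^2 := step2
    _ ≤ (1 + 2^m₁ * ((n*x)/((max 1 k:ℕ):ℝ))^m₁) + (1 + 2^m₂ * ((n*(1-x))/((max 1 (n-k):ℕ):ℝ))^m₂) :=
        add_le_add step3 step4
    _ = 2 + 2^m₁*((n*x)/((max 1 k:ℕ):ℝ))^m₁ + 2^m₂*((n*(1-x))/((max 1 (n-k):ℕ):ℝ))^m₂ := by ring

lemma sum_bound (m₁ m₂ n : ℕ) (x : ℝ) (hx : x ∈ Set.Ioo (0:ℝ) 1) :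
    ∑ k ∈ range (n+1),
      (2 + 2^m₁*((n*x)/((max 1 k:ℕ):ℝ))^m₁ + 2^m₂*((n*(1-x))/((max 1 (n-k):ℕ):ℝ))^m₂)
        * ((n.choose k:ℝ) * x^k * (1-x)^(n-k))
      ≤ 2 + 2^m₁*((m₁:ℝ)+1)^m₁ + 2^m₂*((m₂:ℝ)+1)^m₂ := by
  have h1 := binom_sum_one n x
  have hA := momentA m₁ n x hx
  have hB := momentB m₂ n x hx
  have e : ∑ k ∈ range (n+1),
      (2 + 2^m₁*((n*x)/((max 1 k:ℕ):ℝ))^m₁ + 2^m₂*((n*(1-x))/((max 1 (n-k):ℕ):ℝ))^m₂)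
        * ((n.choose k:ℝ) * x^k * (1-x)^(n-k))
      = 2 * ∑ k ∈ range (n+1), (n.choose k:ℝ) * x^k * (1-x)^(n-k)
        + 2^m₁ * ∑ k ∈ range (n+1), (n.choose k:ℝ) * x^k * (1-x)^(n-k) * ((n*x)/((max 1 k:ℕ):ℝ))^m₁
        + 2^m₂ * ∑ k ∈ range (n+1), (n.choose k:ℝ) * x^k * (1-x)^(n-k) * ((n*(1-x))/((max 1 (n-k):ℕ):ℝ))^m₂ := by
    rw [mul_sum, mul_sum, mul_sum, ← sum_add_distrib, ← sum_add_distrib]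
    exact Finset.sum_congr rfl (fun k _ => by ring)
  rw [e, h1]
  have h2 : (0:ℝ) ≤ 2^m₁ := by positivity
  have h3 : (0:ℝ) ≤ 2^m₂ := by positivity
  nlinarith [mul_le_mul_of_nonneg_left hA h2, mul_le_mul_of_nonneg_left hB h3]

theorem cauchy_schwarz_weight_sum_bound (α β : ℝ) (hα : 0 < α) (hβ : 0 < β) :
    ∃ C > 0, ∀ n : ℕ, 1 ≤ n → ∀ x ∈ Set.Ioo (0:ℝ) 1,
      x^α*(1-x)^β * Real.sqrt (∑ k ∈ Finset.range (n+1),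
        (let ks : ℕ := max 1 (min k (n-1));
          ((((ks:ℝ)/n)^α * (1-(ks:ℝ)/n)^β)⁻¹)^2 * (n.choose k : ℝ) * x^k * (1-x)^(n-k)))
      ≤ C := by
  set m₁ : ℕ := ⌈2*α⌉₊ with hm₁def
  set m₂ : ℕ := ⌈2*β⌉₊ with hm₂def
  have hm₁ : 2*α ≤ (m₁:ℝ) := Nat.le_ceil _
  have hm₂ : 2*β ≤ (m₂:ℝ) := Nat.le_ceil _
  set Csq : ℝ := 2 + 2^m₁*((m₁:ℝ)+1)^m₁ + 2^m₂*((m₂:ℝ)+1)^m₂ with hCsq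
  have hCsq0 : 0 < Csq := by positivity
  refine ⟨Real.sqrt Csq, Real.sqrt_pos.mpr hCsq0, ?_⟩
  intro n hn x hx
  obtain ⟨hx0, hx1⟩ := hx
  have hx1' : (0:ℝ) < 1 - x := by linarith
  have hW : 0 ≤ x^α*(1-x)^β := by positivity
  rcases eq_or_lt_of_le hn with hn1 | hn2
  · -- n = 1
    subst hn1
    have hsum : (∑ k ∈ Finset.range (1+1),
        (let ks : ℕ := max 1 (min k (1-1));
          ((((ks:ℝ)/(1:ℕ))^α * (1-(ks:ℝ)/(1:ℕ))^β)⁻¹)^2 * ((1:ℕ).choose k : ℝ) * x^k * (1-x)^(1-k))) = 0 := by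
      apply Finset.sum_eq_zero
      intro k _
      dsimp only
      have e1 : max 1 (min k (1-1)) = 1 := by omega
      rw [e1]
      norm_num
      left
      rw [Real.zero_rpow hβ.ne']
      simp
    rw [hsum, Real.sqrt_zero, mul_zero]
    exact Real.sqrt_nonneg _
  · have hn2' : 2 ≤ n := hn2
    set S : ℝ := ∑ k ∈ Finset.range (n+1),
        (let ks : ℕ := max 1 (min k (n-1));
          ((((ks:ℝ)/n)^α * (1-(ks:ℝ)/n)^β)⁻¹)^2 * (n.choose k : ℝ) * x^k * (1-x)^(n-k)) with hS
    have hS0 : 0 ≤ S := by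
      apply Finset.sum_nonneg
      intro k _
      dsimp only
      positivity
    have key : (x^α*(1-x)^β)^2 * S ≤ Csq := by
      rw [hS, mul_sum]
      calc ∑ k ∈ Finset.range (n+1), (x^α*(1-x)^β)^2 *
            (let ks : ℕ := max 1 (min k (n-1));
              ((((ks:ℝ)/n)^α * (1-(ks:ℝ)/n)^β)⁻¹)^2 * (n.choose k : ℝ) * x^k * (1-x)^(n-k))
          ≤ ∑ k ∈ range (n+1),
            (2 + 2^m₁*((n*x)/((max 1 k:ℕ):ℝ))^m₁ + 2^m₂*((n*(1-x))/((max 1 (n-k):ℕ):ℝ))^m₂)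
              * ((n.choose k:ℝ) * x^k * (1-x)^(n-k)) := by
            apply Finset.sum_le_sum
            intro k hk
            simp only [mem_range] at hk
            dsimp only
            have hp : (0:ℝ) ≤ (n.choose k:ℝ) * x^k * (1-x)^(n-k) := by positivity
            have htb := term_bound α β hα hβ m₁ m₂ hm₁ hm₂ n k hn2' (by omega) x ⟨hx0, hx1⟩
            calc (x^α*(1-x)^β)^2 *
                  (((((max 1 (min k (n-1)):ℕ):ℝ)/n)^α * (1-((max 1 (min k (n-1)):ℕ):ℝ)/n)^β)⁻¹^2 * (n.choose k : ℝ) * x^k * (1-x)^(n-k))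
                = ((x^α*(1-x)^β)^2 * ((((max 1 (min k (n-1)):ℕ):ℝ)/n)^α * (1-((max 1 (min k (n-1)):ℕ):ℝ)/n)^β)⁻¹^2)
                  * ((n.choose k:ℝ) * x^k * (1-x)^(n-k)) := by ring
              _ ≤ (2 + 2^m₁*((n*x)/((max 1 k:ℕ):ℝ))^m₁ + 2^m₂*((n*(1-x))/((max 1 (n-k):ℕ):ℝ))^m₂)
                  * ((n.choose k:ℝ) * x^k * (1-x)^(n-k)) := mul_le_mul_of_nonneg_right htb hp
        _ ≤ Csq := sum_bound m₁ m₂ n x ⟨hx0, hx1⟩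
    calc x^α*(1-x)^β * Real.sqrt S = Real.sqrt ((x^α*(1-x)^β)^2 * S) := by
          rw [Real.sqrt_mul (sq_nonneg _), Real.sqrt_sq hW]
      _ ≤ Real.sqrt Csq := Real.sqrt_le_sqrt key
end
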